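/- arXiv:1501.01350 — 9 statements merged into one kernel-verified Lean document; each statement's English description precedes it below -/
import Mathlib

section
/- For every real α with 1 < α < 2 and every integer k with k ≥ 3, the fractional centred difference coefficient satisfies the two-sided bound S(α)·((α+4)/(α+2k))^{2(α+1)} < |g_k^{(α)}| < S(α)·((α+6)/(α+2(k+1)))^{α+1}, where S(α) = −Γ(α+1)/(Γ(α/2−1)·Γ(α/2+3)) (note S(α) > 0 for 1 < α < 2 since Γ(α/2−1) < 0). -/
open Real

/-- The fractional centred difference coefficients
`g_k^{(α)} = ((−1)^k Γ(α+1)) / (Γ(α/2 − k + 1) Γ(α/2 + k + 1))`. -/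
noncomputable def fracCoeff (α : ℝ) (k : ℤ) : ℝ :=
  ((-1 : ℝ) ^ k * Real.Gamma (α + 1)) /
    (Real.Gamma (α / 2 - (k : ℝ) + 1) * Real.Gamma (α / 2 + (k : ℝ) + 1))

/-- `S(α) = −Γ(α+1)/(Γ(α/2−1)·Γ(α/2+3))`. -/
noncomputable def Scoeff (α : ℝ) : ℝ :=
  -Real.Gamma (α + 1) / (Real.Gamma (α / 2 - 1) * Real.Gamma (α / 2 + 3))

/-- `log x ≤ (x - 1/x)/2` for `x ≥ 1`. -/
lemma log_le_half_sub_inv {x : ℝ} (hx : 1 ≤ x) : Real.log x ≤ (x - 1/x) / 2 := by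
  have hx0 : (0:ℝ) < x := by linarith
  set c := (x - 1/x) / 2 with hc
  have hinv : 1/x ≤ 1 := by rw [div_le_one hx0]; exact hx
  have hc0 : 0 ≤ c := by rw [hc]; linarith
  have hquad := Real.quadratic_le_exp_of_nonneg hc0
  have hid : 1 + c + c^2/2 - x = (x-1)^4 / (8*x^2) := by
    rw [hc]; field_simp; ring
  have hge : x ≤ 1 + c + c^2/2 := by
    have hnn : (0:ℝ) ≤ (x-1)^4 / (8*x^2) := by positivity
    linarith
  have : x ≤ Real.exp c := le_trans hge hquad
  calc Real.log x ≤ Real.log (Real.exp c) := Real.log_le_log (by positivity) this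
    _ = c := Real.log_exp c

/-- Per-step lower inequality. -/
lemma stepL {α m : ℝ} (hα1 : 1 < α) (hα2 : α < 2) (hm : 4 ≤ m) :
    ((α + m) / (α + m + 2)) ^ (2 * (α + 1)) < (m - α) / (m + 2 + α) := by
  have h1 : (0:ℝ) < α + m := by linarith
  have h2 : (0:ℝ) < α + m + 2 := by linarith
  have h3 : (0:ℝ) < m - α := by linarith
  have h4 : (0:ℝ) < m + 2 + α := by linarith
  have hb : (0:ℝ) < (α + m) / (α + m + 2) := by positivity
  rw [Real.rpow_def_of_pos hb, ← Real.exp_log (show (0:ℝ) < (m - α)/(m + 2 + α) by positivity)]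
  apply Real.exp_lt_exp.mpr
  -- log identities
  have hlb : Real.log ((α + m) / (α + m + 2)) = - Real.log ((α + m + 2) / (α + m)) := by
    rw [← Real.log_inv, inv_div]
  have hlr : Real.log ((m - α) / (m + 2 + α)) = - Real.log ((m + 2 + α) / (m - α)) := by
    rw [← Real.log_inv, inv_div]
  rw [hlb, hlr]
  set X₂ : ℝ := (m + 2 + α) / (m - α) with hX₂
  have hX₂1 : 1 ≤ X₂ := by rw [hX₂, le_div_iff₀ h3]; linarith
  -- lower bound for A = log ((α+m+2)/(α+m))
  have hA : 2/(α + m + 2) ≤ Real.log ((α + m + 2)/(α + m)) := by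
    have := Real.one_sub_inv_le_log_of_pos (show (0:ℝ) < (α + m + 2)/(α + m) by positivity)
    have hinv : ((α + m + 2)/(α + m))⁻¹ = (α + m)/(α + m + 2) := by rw [inv_div]
    rw [hinv] at this
    have : 1 - (α + m)/(α + m + 2) = 2/(α + m + 2) := by field_simp; ring
    linarith [Real.one_sub_inv_le_log_of_pos (show (0:ℝ) < (α + m + 2)/(α + m) by positivity),
      this]
  -- upper bound for B = log X₂ via sqrt
  set s : ℝ := Real.sqrt X₂ with hs
  have hs0 : 0 < s := Real.sqrt_pos.mpr (by positivity)
  have hs1 : 1 ≤ s := by rw [hs]; exact Real.one_le_sqrt.mpr hX₂1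
  have hs2 : s^2 = X₂ := Real.sq_sqrt (by positivity)
  have hBs : Real.log X₂ = 2 * Real.log s := by
    rw [hs, Real.log_sqrt (by positivity)]; ring
  have hB : Real.log X₂ ≤ s - 1/s := by
    rw [hBs]
    have := log_le_half_sub_inv hs1
    linarith
  -- key polynomial fact: α+m+2 < 2(m-α)s
  have hkey : α + m + 2 < 2*(m - α)*s := by
    have hsq : (2*(m-α)*s)^2 = 4*(m-α)*(m+2+α) := by
      have : (2*(m-α)*s)^2 = 4*(m-α)^2 * s^2 := by ring
      rw [this, hs2, hX₂]; field_simp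
    have hlt : (α + m + 2)^2 < (2*(m-α)*s)^2 := by rw [hsq]; nlinarith
    exact lt_of_pow_lt_pow_left₀ 2 (by positivity) hlt
  -- finish: log X₂ ≤ s - 1/s = (X₂-1)/s = (2α+2)/((m-α)s) < (4α+4)/(α+m+2) ≤ 2(α+1)·A
  have hfrac : s - 1/s = (2*α + 2)/((m - α)*s) := by
    have hsX : s^2 * (m - α) = m + 2 + α := by
      rw [hs2, hX₂]; field_simp
    field_simp
    linear_combination hsX
  have hlast : (2*α + 2)/((m - α)*s) < (4*α + 4)/(α + m + 2) := by
    rw [div_lt_div_iff₀ (by positivity) h2]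
    nlinarith [hkey, hs0]
  have hAmul : (4*α + 4)/(α + m + 2) ≤ 2*(α+1) * Real.log ((α + m + 2)/(α + m)) := by
    have h2a : (0:ℝ) < 2*(α+1) := by linarith
    calc (4*α + 4)/(α + m + 2) = 2*(α+1) * (2/(α + m + 2)) := by ring
      _ ≤ 2*(α+1) * Real.log ((α + m + 2)/(α + m)) := by
          apply mul_le_mul_of_nonneg_left hA (by linarith)
  linarith

/-- Per-step upper inequality. -/
lemma stepU {α m : ℝ} (hα1 : 1 < α) (hα2 : α < 2) (hm : 4 ≤ m) :
    (m - α) / (m + 2 + α) < ((α + m + 2) / (α + m + 4)) ^ (α + 1) := by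
  have h2 : (0:ℝ) < α + m + 2 := by linarith
  have h3 : (0:ℝ) < m - α := by linarith
  have h4 : (0:ℝ) < m + 2 + α := by linarith
  have h5 : (0:ℝ) < α + m + 4 := by linarith
  have hb : (0:ℝ) < (α + m + 2) / (α + m + 4) := by positivity
  rw [Real.rpow_def_of_pos hb, ← Real.exp_log (show (0:ℝ) < (m - α)/(m + 2 + α) by positivity)]
  apply Real.exp_lt_exp.mpr
  have hlb : Real.log ((α + m + 2) / (α + m + 4)) = - Real.log ((α + m + 4) / (α + m + 2)) := by
    rw [← Real.log_inv, inv_div]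
  have hlr : Real.log ((m - α) / (m + 2 + α)) = - Real.log ((m + 2 + α) / (m - α)) := by
    rw [← Real.log_inv, inv_div]
  rw [hlb, hlr]
  -- need : (α+1) * log Y < log X₂  where Y = (α+m+4)/(α+m+2), X₂ = (m+2+α)/(m-α)
  have hY1 : 1 ≤ (α + m + 4)/(α + m + 2) := by rw [le_div_iff₀ h2]; linarith
  have hYub : Real.log ((α + m + 4)/(α + m + 2)) ≤ 2*(α+m+3)/((α+m+2)*(α+m+4)) := by
    have h := log_le_half_sub_inv hY1
    have : ((α + m + 4)/(α + m + 2) - 1/((α + m + 4)/(α + m + 2)))/2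
        = 2*(α+m+3)/((α+m+2)*(α+m+4)) := by
      rw [one_div, inv_div]; field_simp; ring
    linarith
  have hXlb : (2*α + 2)/(m + 2 + α) ≤ Real.log ((m + 2 + α)/(m - α)) := by
    have := Real.one_sub_inv_le_log_of_pos (show (0:ℝ) < (m + 2 + α)/(m - α) by positivity)
    rw [inv_div] at this
    have heq : 1 - (m - α)/(m + 2 + α) = (2*α + 2)/(m + 2 + α) := by field_simp; ring
    linarith
  have hfin : (α+1) * (2*(α+m+3)/((α+m+2)*(α+m+4))) < (2*α + 2)/(m + 2 + α) := by
    rw [mul_div_assoc'] at *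
    rw [div_lt_div_iff₀ (by positivity) h4]
    nlinarith
  have hmul : (α+1) * Real.log ((α + m + 4)/(α + m + 2))
      ≤ (α+1) * (2*(α+m+3)/((α+m+2)*(α+m+4))) :=
    mul_le_mul_of_nonneg_left hYub (by linarith)
  linarith

lemma gamma_half_arg_ne_zero {α : ℝ} (hα1 : 1 < α) (hα2 : α < 2) (k : ℤ) :
    Real.Gamma (α/2 - (k:ℝ)) ≠ 0 := by
  apply Real.Gamma_ne_zero
  intro n h
  have h0 : ((k - n : ℤ) : ℝ) = α/2 := by push_cast; linarith
  have h1 : (0:ℝ) < ((k - n : ℤ) : ℝ) := by rw [h0]; linarith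
  have h2 : ((k - n : ℤ) : ℝ) < 1 := by rw [h0]; linarith
  have h1' : (0:ℤ) < k - n := by exact_mod_cast h1
  have h2' : (k - n : ℤ) < 1 := by exact_mod_cast h2
  omega

/-- The recurrence. -/
lemma fracCoeff_succ {α : ℝ} (hα1 : 1 < α) (hα2 : α < 2) (k : ℤ) (hk : 2 ≤ k) :
    fracCoeff α (k + 1) = fracCoeff α k * ((2*(k:ℝ) - α)/(2*(k:ℝ) + 2 + α)) := by
  have hk2 : (2:ℝ) ≤ (k:ℝ) := by exact_mod_cast hk
  have hne1 : α/2 + (k:ℝ) + 1 ≠ 0 := by positivity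
  have hne2 : α/2 - (k:ℝ) ≠ 0 := by
    intro h; nlinarith
  have hΓ1 : Real.Gamma (α/2 - (k:ℝ)) ≠ 0 := gamma_half_arg_ne_zero hα1 hα2 k
  have hΓ2 : Real.Gamma (α/2 + (k:ℝ) + 1) ≠ 0 :=
    (Real.Gamma_pos_of_pos (by positivity)).ne'
  unfold fracCoeff
  have hcast : ((k + 1 : ℤ) : ℝ) = (k:ℝ) + 1 := by push_cast; ring
  rw [hcast]
  have e1 : α / 2 - ((k:ℝ) + 1) + 1 = α/2 - (k:ℝ) := by ring
  have e2 : α / 2 + ((k:ℝ) + 1) + 1 = (α/2 + (k:ℝ) + 1) + 1 := by ring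
  have e3 : α / 2 - (k:ℝ) + 1 = (α/2 - (k:ℝ)) + 1 := by ring
  rw [e1, e2, e3, Real.Gamma_add_one hne1, Real.Gamma_add_one hne2]
  have hzpow : (-1 : ℝ) ^ (k + 1) = (-1:ℝ)^k * (-1) := by
    rw [zpow_add_one₀ (by norm_num : (-1:ℝ) ≠ 0)]
  have hd : (2*(k:ℝ) + 2 + α) ≠ 0 := by positivity
  have hD1 : Real.Gamma (α/2 - (k:ℝ)) * ((α/2 + (k:ℝ) + 1) * Real.Gamma (α/2 + (k:ℝ) + 1)) ≠ 0 :=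
    mul_ne_zero hΓ1 (mul_ne_zero hne1 hΓ2)
  have hD2 : (α/2 - (k:ℝ)) * Real.Gamma (α/2 - (k:ℝ)) * Real.Gamma (α/2 + (k:ℝ) + 1) *
      (2*(k:ℝ) + 2 + α) ≠ 0 :=
    mul_ne_zero (mul_ne_zero (mul_ne_zero hne2 hΓ1) hΓ2) hd
  rw [hzpow, div_mul_div_comm, div_eq_div_iff hD1 hD2]
  ring

theorem fracCoeff_two_sided_bound (α : ℝ) (hα1 : 1 < α) (hα2 : α < 2)
    (k : ℤ) (hk : 3 ≤ k) :
    Scoeff α * ((α + 4) / (α + 2 * (k : ℝ))) ^ (2 * (α + 1)) < |fracCoeff α k| ∧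
    |fracCoeff α k| < Scoeff α * ((α + 6) / (α + 2 * ((k : ℝ) + 1))) ^ (α + 1) := by
  have hΓa : 0 < Real.Gamma (α + 1) := Real.Gamma_pos_of_pos (by linarith)
  have hΓ3 : 0 < Real.Gamma (α/2 + 3) := Real.Gamma_pos_of_pos (by linarith)
  have hΓh : 0 < Real.Gamma (α/2) := Real.Gamma_pos_of_pos (by linarith)
  have hne : α/2 - 1 ≠ 0 := by intro h; nlinarith
  have hrec1 : Real.Gamma (α/2) = (α/2 - 1) * Real.Gamma (α/2 - 1) := by
    have h := Real.Gamma_add_one hne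
    rw [show α/2 - 1 + 1 = α/2 by ring] at h
    exact h
  have hΓneg : Real.Gamma (α/2 - 1) < 0 := by nlinarith
  have hS : 0 < Scoeff α := by
    unfold Scoeff
    exact div_pos_of_neg_of_neg (by linarith) (mul_neg_of_neg_of_pos hΓneg hΓ3)
  have hbase2 : fracCoeff α 2 = - Scoeff α := by
    unfold fracCoeff Scoeff
    rw [show ((2:ℤ):ℝ) = (2:ℝ) by norm_num,
      show ((-1:ℝ) ^ (2:ℤ)) = 1 by norm_num,
      show α/2 - 2 + 1 = α/2 - 1 by ring,
      show α/2 + 2 + 1 = α/2 + 3 by ring]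
    ring
  have key : ∀ n : ℤ, 3 ≤ n →
      Scoeff α * ((α + 4) / (α + 2 * (n : ℝ))) ^ (2 * (α + 1)) < -fracCoeff α n ∧
      -fracCoeff α n < Scoeff α * ((α + 6) / (α + 2 * ((n : ℝ) + 1))) ^ (α + 1) := by
    refine fun n hn => Int.le_induction
      (motive := fun (j : ℤ) _ =>
        Scoeff α * ((α + 4) / (α + 2 * (j : ℝ))) ^ (2 * (α + 1)) < -fracCoeff α j ∧
        -fracCoeff α j < Scoeff α * ((α + 6) / (α + 2 * ((j : ℝ) + 1))) ^ (α + 1))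
      ?_ ?_ n hn
    · have hrec2 := fracCoeff_succ hα1 hα2 2 le_rfl
      rw [show (2:ℤ) + 1 = 3 by norm_num] at hrec2
      have hg3 : -fracCoeff α 3 = Scoeff α * ((4 - α)/(6 + α)) := by
        rw [hrec2, hbase2]
        push_cast
        ring
      constructor
      · have hL := stepL hα1 hα2 (le_refl (4:ℝ))
        rw [show α + (4:ℝ) + 2 = α + 6 by ring, show (4:ℝ) + 2 + α = 6 + α by ring] at hL
        rw [hg3, show ((3:ℤ):ℝ) = (3:ℝ) by norm_num, show α + 2 * (3:ℝ) = α + 6 by ring]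
        exact mul_lt_mul_of_pos_left hL hS
      · have hU := stepU hα1 hα2 (le_refl (4:ℝ))
        rw [show α + (4:ℝ) + 2 = α + 6 by ring, show (4:ℝ) + 2 + α = 6 + α by ring,
          show α + (4:ℝ) + 4 = α + 8 by ring] at hU
        rw [hg3, show ((3:ℤ):ℝ) = (3:ℝ) by norm_num,
          show α + 2 * ((3:ℝ) + 1) = α + 8 by ring]
        exact mul_lt_mul_of_pos_left hU hS
    · intro n hn ih
      have hn3 : (3:ℝ) ≤ (n:ℝ) := by exact_mod_cast hn
      have h2n : (4:ℝ) ≤ 2 * (n:ℝ) := by linarith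
      have h0a : (0:ℝ) < α + 2 * (n:ℝ) := by linarith
      have h0b : (0:ℝ) < α + 2 * (n:ℝ) + 2 := by linarith
      have h0c : (0:ℝ) < α + 2 * (n:ℝ) + 4 := by linarith
      have hrecn := fracCoeff_succ hα1 hα2 n (by omega)
      have hr0 : 0 < (2*(n:ℝ) - α)/(2*(n:ℝ) + 2 + α) := by
        apply div_pos <;> linarith
      have hposL : 0 < Scoeff α * ((α + 4) / (α + 2 * (n:ℝ))) ^ (2*(α+1)) :=
        mul_pos hS (Real.rpow_pos_of_pos (div_pos (by linarith) h0a) _)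
      have hposU : 0 < Scoeff α * ((α + 6) / (α + 2 * ((n:ℝ) + 1))) ^ (α+1) :=
        mul_pos hS (Real.rpow_pos_of_pos (div_pos (by linarith) (by linarith)) _)
      have hL := stepL hα1 hα2 h2n
      have hU := stepU hα1 hα2 h2n
      -- hL : ((α+2n)/(α+2n+2))^(2(α+1)) < (2n-α)/(2n+2+α)
      -- hU : (2n-α)/(2n+2+α) < ((α+2n+2)/(α+2n+4))^(α+1)
      constructor
      · -- lower bound at n+1
        push_cast
        rw [show α + 2 * ((n:ℝ) + 1) = α + 2*(n:ℝ) + 2 by ring, hrecn,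
          show -(fracCoeff α n * ((2*(n:ℝ) - α)/(2*(n:ℝ) + 2 + α)))
            = (-fracCoeff α n) * ((2*(n:ℝ) - α)/(2*(n:ℝ) + 2 + α)) by ring]
        have hcomb : ((α + 4)/(α + 2*(n:ℝ)))^(2*(α+1)) *
            ((α + 2*(n:ℝ))/(α + 2*(n:ℝ) + 2))^(2*(α+1))
            = ((α + 4)/(α + 2*(n:ℝ) + 2))^(2*(α+1)) := by
          rw [← Real.mul_rpow (le_of_lt (div_pos (by linarith) h0a))
            (le_of_lt (div_pos h0a h0b))]
          congr 1
          field_simp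
        calc Scoeff α * ((α + 4)/(α + 2*(n:ℝ) + 2))^(2*(α+1))
            = (Scoeff α * ((α + 4)/(α + 2*(n:ℝ)))^(2*(α+1))) *
              ((α + 2*(n:ℝ))/(α + 2*(n:ℝ) + 2))^(2*(α+1)) := by
              rw [mul_assoc, hcomb]
          _ < (-fracCoeff α n) * ((2*(n:ℝ) - α)/(2*(n:ℝ) + 2 + α)) :=
              mul_lt_mul'' ih.1 hL hposL.le
                (Real.rpow_nonneg (le_of_lt (div_pos h0a h0b)) _)
      · -- upper bound at n+1
        push_cast
        rw [show α + 2 * ((n:ℝ) + 1 + 1) = α + 2*(n:ℝ) + 4 by ring, hrecn,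
          show -(fracCoeff α n * ((2*(n:ℝ) - α)/(2*(n:ℝ) + 2 + α)))
            = (-fracCoeff α n) * ((2*(n:ℝ) - α)/(2*(n:ℝ) + 2 + α)) by ring]
        have hcomb : ((α + 6)/(α + 2*(n:ℝ) + 2))^(α+1) *
            ((α + 2*(n:ℝ) + 2)/(α + 2*(n:ℝ) + 4))^(α+1)
            = ((α + 6)/(α + 2*(n:ℝ) + 4))^(α+1) := by
          rw [← Real.mul_rpow (le_of_lt (div_pos (by linarith) h0b))
            (le_of_lt (div_pos h0b h0c))]
          congr 1
          field_simp
        have hih2 : -fracCoeff α n < Scoeff α * ((α + 6)/(α + 2*(n:ℝ) + 2))^(α+1) := by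
          have := ih.2
          rw [show α + 2 * ((n:ℝ) + 1) = α + 2*(n:ℝ) + 2 by ring] at this
          exact this
        calc (-fracCoeff α n) * ((2*(n:ℝ) - α)/(2*(n:ℝ) + 2 + α))
            < (Scoeff α * ((α + 6)/(α + 2*(n:ℝ) + 2))^(α+1)) *
              ((2*(n:ℝ) - α)/(2*(n:ℝ) + 2 + α)) :=
              mul_lt_mul_of_pos_right hih2 hr0
          _ < (Scoeff α * ((α + 6)/(α + 2*(n:ℝ) + 2))^(α+1)) *
              ((α + 2*(n:ℝ) + 2)/(α + 2*(n:ℝ) + 4))^(α+1) := by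
              apply mul_lt_mul_of_pos_left hU
              exact mul_pos hS (Real.rpow_pos_of_pos (div_pos (by linarith) h0b) _)
          _ = Scoeff α * ((α + 6)/(α + 2*(n:ℝ) + 4))^(α+1) := by
              rw [mul_assoc, hcomb]
  have hkey := key k hk
  have hk3 : (3:ℝ) ≤ (k:ℝ) := by exact_mod_cast hk
  have hposL : 0 < Scoeff α * ((α + 4) / (α + 2 * (k:ℝ))) ^ (2*(α+1)) :=
    mul_pos hS (Real.rpow_pos_of_pos (div_pos (by linarith) (by linarith)) _)
  have hneg : fracCoeff α k < 0 := by linarith [hkey.1]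
  rw [abs_of_neg hneg]
  exact hkey
end

section
/- For every real α with 1 < α < 2 and all integers n, m with 3 ≤ n ≤ m, the finite sum of absolute values of the fractional centred difference coefficients satisfies S(α)·[(α+2n)^{−(2α+1)} − (α+2m+2)^{−(2α+1)}]·(α+4)^{2(α+1)}/(2(2α+1)) < Σ_{k=n}^{m} |g_k^{(α)}| < S(α)·[(α+2n)^{−α} − (α+2m+2)^{−α}]·(α+6)^{α+1}/(2α), where S(α) = −Γ(α+1)/(Γ(α/2−1)·Γ(α/2+3)). -/
open Real

section
variable {α : ℝ} (hα1 : 1 < α) (hα2 : α < 2)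
include hα1 hα2

lemma half_add_ne_int (r : ℝ) (hr : ∃ j : ℤ, r = j) : α / 2 + r ≠ 0 := by
  obtain ⟨j, rfl⟩ := hr
  intro h
  have h1 : α / 2 = -(j : ℝ) := by linarith
  have h2 : (1:ℝ)/2 < -(j:ℝ) := by rw [← h1]; linarith
  have h3 : -(j:ℝ) < 1 := by rw [← h1]; linarith
  have h4 : -j < 1 := by exact_mod_cast h3
  have h5 : (1:ℝ)/2 < ((-j : ℤ) : ℝ) := by push_cast; linarith
  have h6 : (0:ℤ) < -j := by
    by_contra hc
    push_neg at hc
    have : ((-j : ℤ) : ℝ) ≤ 0 := by exact_mod_cast hc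
    linarith
  omega

lemma gamma_arg_ne_zero (r : ℝ) (hr : ∃ j : ℤ, r = j) : Real.Gamma (α / 2 + r) ≠ 0 := by
  apply Real.Gamma_ne_zero
  intro mm h
  obtain ⟨j, rfl⟩ := hr
  exact half_add_ne_int hα1 hα2 ((j : ℝ) + (mm : ℝ)) ⟨j + mm, by push_cast; ring⟩ (by push_cast at h; push_cast; linarith)

lemma frac_rec (k : ℤ) :
    fracCoeff α (k + 1) = fracCoeff α k * (((k:ℝ) - α/2)/((k:ℝ) + α/2 + 1)) := by
  unfold fracCoeff
  have hne1 : α / 2 - (k:ℝ) ≠ 0 := by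
    have := half_add_ne_int hα1 hα2 (-(k:ℝ)) ⟨-k, by push_cast; ring⟩
    intro h; apply this; linarith
  have hg1 : Real.Gamma (α / 2 - (k:ℝ) + 1) = (α/2 - k) * Real.Gamma (α/2 - k) :=
    Real.Gamma_add_one hne1
  have hne2 : α / 2 + (k:ℝ) + 1 ≠ 0 := by
    have := half_add_ne_int hα1 hα2 ((k:ℝ) + 1) ⟨k + 1, by push_cast; ring⟩
    intro h; apply this; linarith
  have hg2 : Real.Gamma (α / 2 + (k:ℝ) + 1 + 1) = (α/2 + k + 1) * Real.Gamma (α/2 + k + 1) :=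
    Real.Gamma_add_one hne2
  have hG1 : Real.Gamma (α / 2 - (k:ℝ)) ≠ 0 :=
    gamma_arg_ne_zero hα1 hα2 (-(k:ℝ)) ⟨-k, by push_cast; ring⟩
  have hG2 : Real.Gamma (α / 2 + (k:ℝ) + 1) ≠ 0 := by
    have := gamma_arg_ne_zero hα1 hα2 ((k:ℝ) + 1) ⟨k + 1, by push_cast; ring⟩
    convert this using 2; ring
  have hc1 : α / 2 - ((k:ℤ)+1 : ℤ) + 1 = α / 2 - (k:ℝ) := by push_cast; ring
  have hc2 : α / 2 + ((k:ℤ)+1 : ℤ) + 1 = α / 2 + (k:ℝ) + 1 + 1 := by push_cast; ring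
  rw [hc1, hc2, hg2]
  have hpow : ((-1:ℝ)) ^ (k+1) = (-1:ℝ)^k * (-1) := by
    rw [zpow_add₀ (by norm_num : (-1:ℝ) ≠ 0)]; simp
  rw [hpow]
  rw [show Real.Gamma (α / 2 - (k:ℝ) + 1) = (α/2 - k) * Real.Gamma (α/2 - k) from hg1]
  have hne2' : (k:ℝ) + α/2 + 1 ≠ 0 := by intro h; apply hne2; linarith
  rw [div_mul_div_comm, div_eq_div_iff (by exact mul_ne_zero hG1 (mul_ne_zero hne2 hG2))
    (mul_ne_zero (mul_ne_zero (mul_ne_zero hne1 hG1) hG2) hne2')]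
  ring

lemma frac_two : fracCoeff α 2 = -Scoeff α := by
  unfold fracCoeff Scoeff
  norm_num
  rw [show α / 2 - 2 + 1 = α / 2 - 1 by ring, show α / 2 + 2 + 1 = α / 2 + 3 by ring]
  ring

lemma Scoeff_pos : 0 < Scoeff α := by
  unfold Scoeff
  have h1 : 0 < Real.Gamma (α + 1) := Real.Gamma_pos_of_pos (by linarith)
  have h2 : 0 < Real.Gamma (α / 2 + 3) := Real.Gamma_pos_of_pos (by linarith)
  have h3 : Real.Gamma (α / 2 - 1) < 0 := by
    have hne : α / 2 - 1 ≠ 0 := by intro h; rw [sub_eq_zero] at h; linarith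
    have hg : Real.Gamma (α / 2 - 1 + 1) = (α/2 - 1) * Real.Gamma (α/2 - 1) :=
      Real.Gamma_add_one hne
    have hp : 0 < Real.Gamma (α / 2 - 1 + 1) := by
      apply Real.Gamma_pos_of_pos; linarith
    nlinarith [hp, hg]
  have hd : Real.Gamma (α / 2 - 1) * Real.Gamma (α / 2 + 3) < 0 :=
    mul_neg_of_neg_of_pos h3 h2
  exact div_pos_of_neg_of_neg (by linarith) hd
end

-- core log inequality: log u ≤ (u-1)/√u for u ≥ 1
lemma core_log {u : ℝ} (hu : 1 ≤ u) : Real.log u ≤ (u - 1) / Real.sqrt u := by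
  set t := Real.sqrt u with ht
  have ht1 : 1 ≤ t := by
    rw [ht, show (1:ℝ) = Real.sqrt 1 by simp]
    exact Real.sqrt_le_sqrt hu
  have ht0 : 0 < t := lt_of_lt_of_le one_pos ht1
  have hu0 : (0:ℝ) ≤ u := le_trans zero_le_one hu
  have htu : t ^ 2 = u := Real.sq_sqrt hu0
  have key : ∀ s : ℝ, 1 ≤ s → 2 * Real.log s ≤ s - s⁻¹ := by
    intro s hs
    have hmono : MonotoneOn (fun x : ℝ => x - x⁻¹ - 2 * Real.log x) (Set.Ici 1) := by
      apply monotoneOn_of_deriv_nonneg (convex_Ici 1)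
      · apply ContinuousOn.sub
        · exact (continuousOn_id.sub (continuousOn_inv₀.mono (by intro x hx; simp at hx ⊢; linarith)))
        · exact (continuousOn_const.mul (Real.continuousOn_log.mono (by intro x hx; simp at hx ⊢; intro h; linarith)))
      · intro x hx
        rw [interior_Ici] at hx
        simp only [Set.mem_Ioi] at hx
        have hx0 : x ≠ 0 := by positivity
        exact (((hasDerivAt_id x).sub (hasDerivAt_inv hx0)).sub
          ((Real.hasDerivAt_log hx0).const_mul 2)).differentiableAt.differentiableWithinAt
      · intro x hx
        rw [interior_Ici] at hx
        simp only [Set.mem_Ioi] at hx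
        have hx0 : x ≠ 0 := by positivity
        have hd : HasDerivAt (fun x : ℝ => x - x⁻¹ - 2 * Real.log x)
            (1 - (-(x^2)⁻¹) - 2 * x⁻¹) x :=
          ((hasDerivAt_id x).sub (hasDerivAt_inv hx0)).sub ((Real.hasDerivAt_log hx0).const_mul 2)
        rw [hd.deriv]
        have : 1 - (-(x^2)⁻¹) - 2 * x⁻¹ = (1 - x⁻¹)^2 := by
          field_simp
          ring
        rw [this]
        positivity
    have h0 : (0:ℝ) ≤ s - s⁻¹ - 2 * Real.log s := by
      have := hmono (Set.mem_Ici.mpr le_rfl) (Set.mem_Ici.mpr hs) hs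
      simpa using this
    linarith
  have := key t ht1
  have hlog : Real.log u = 2 * Real.log t := by
    rw [← htu, Real.log_pow]; push_cast; ring
  rw [hlog, ← htu]
  have heq : (t^2 - 1)/t = t - t⁻¹ := by field_simp
  rw [heq]
  exact this

-- crude: log y - log z ≤ (y-z)/z
lemma log_sub_le_crude {z y : ℝ} (hz : 0 < z) (hzy : z ≤ y) :
    Real.log y - Real.log z ≤ (y - z) / z := by
  have hy : 0 < y := lt_of_lt_of_le hz hzy
  have h := Real.log_le_sub_one_of_pos (show 0 < y / z by positivity)
  rw [Real.log_div hy.ne' hz.ne'] at h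
  have : y / z - 1 = (y - z)/z := by field_simp
  linarith [this ▸ h]

-- crude lower: (y-z)/y ≤ log y - log z
lemma log_sub_ge_crude {z y : ℝ} (hz : 0 < z) (hzy : z ≤ y) :
    (y - z) / y ≤ Real.log y - Real.log z := by
  have hy : 0 < y := lt_of_lt_of_le hz hzy
  have h := Real.log_le_sub_one_of_pos (show 0 < z / y by positivity)
  rw [Real.log_div hz.ne' hy.ne'] at h
  have heq : z / y - 1 = -((y - z)/y) := by field_simp; ring
  linarith [heq ▸ h]

-- sharp: log y - log z ≤ (y-z)/√(z*y)
lemma log_sub_le_sharp {z y : ℝ} (hz : 0 < z) (hzy : z ≤ y) :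
    Real.log y - Real.log z ≤ (y - z) / Real.sqrt (z * y) := by
  have hy : 0 < y := lt_of_lt_of_le hz hzy
  have h := core_log (show (1:ℝ) ≤ y / z by rw [le_div_iff₀ hz]; linarith)
  rw [Real.log_div hy.ne' hz.ne'] at h
  have hsz : (0:ℝ) < Real.sqrt z := Real.sqrt_pos.mpr hz
  have hsy : (0:ℝ) < Real.sqrt y := Real.sqrt_pos.mpr hy
  have hzz : Real.sqrt z * Real.sqrt z = z := Real.mul_self_sqrt hz.le
  have hyy : Real.sqrt y * Real.sqrt y = y := Real.mul_self_sqrt hy.le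
  have hrw : (y / z - 1) / Real.sqrt (y / z) = (y - z) / Real.sqrt (z * y) := by
    rw [Real.sqrt_div' y hz.le, Real.sqrt_mul hz.le]
    field_simp
    linear_combination (y - z) * hzz
  linarith [hrw ▸ h]

example : True := trivial

-- MVT-type lower bound: p(b-a)b^{-(p+1)} < a^{-p} - b^{-p}
lemma rpow_diff_gt {a b p : ℝ} (ha : 0 < a) (hab : a < b) (hp : 1 < p) :
    p * (b - a) * b ^ (-(p+1)) < a ^ (-p) - b ^ (-p) := by
  have hb : 0 < b := lt_trans ha hab
  have hs0 : 0 < (b - a)/a := div_pos (by linarith) ha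
  have hbern : 1 + p * ((b - a)/a) < (1 + (b-a)/a) ^ p :=
    one_add_mul_self_lt_rpow_one_add (by linarith) (ne_of_gt hs0) hp
  have h1 : (1 : ℝ) + (b-a)/a = b / a := by field_simp; ring
  rw [h1, Real.div_rpow hb.le ha.le] at hbern
  have hap : (0:ℝ) < a ^ p := Real.rpow_pos_of_pos ha p
  have hbp : (0:ℝ) < b ^ p := Real.rpow_pos_of_pos hb p
  have hna : a ^ (-p) = (a ^ p)⁻¹ := Real.rpow_neg ha.le p
  have hnb : b ^ (-p) = (b ^ p)⁻¹ := Real.rpow_neg hb.le p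
  have hnb1 : b ^ (-(p+1)) = (b ^ p)⁻¹ * b⁻¹ := by
    rw [show -(p+1) = -p + (-1) by ring, Real.rpow_add hb, Real.rpow_neg_one, hnb]
  rw [hna, hnb, hnb1]
  have h2 : (1 + p*((b-a)/a)) * (b^p)⁻¹ < (b^p/a^p) * (b^p)⁻¹ :=
    mul_lt_mul_of_pos_right hbern (by positivity)
  have h3 : (b^p/a^p) * (b^p)⁻¹ = (a^p)⁻¹ := by field_simp
  have h5 : p*(b-a)*((b^p)⁻¹ * b⁻¹) < p*(b-a)/a*(b^p)⁻¹ := by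
    have hba : b⁻¹ < a⁻¹ := by exact inv_strictAnti₀ ha hab
    calc p*(b-a)*((b^p)⁻¹ * b⁻¹) = p*(b-a)*(b^p)⁻¹ * b⁻¹ := by ring
      _ < p*(b-a)*(b^p)⁻¹ * a⁻¹ := by
          apply mul_lt_mul_of_pos_left hba
          have hba2 : 0 < b - a := sub_pos.mpr hab
          positivity
      _ = p*(b-a)/a*(b^p)⁻¹ := by ring
  have h4 : (1 + p*((b-a)/a)) * (b^p)⁻¹ = (b^p)⁻¹ + p*(b-a)/a*(b^p)⁻¹ := by ring
  linarith

-- MVT-type upper bound: a^{-p} - b^{-p} < p(b-a)a^{-(p+1)}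
lemma rpow_diff_lt {a b p : ℝ} (ha : 0 < a) (hab : a < b) (hp : 1 < p) :
    a ^ (-p) - b ^ (-p) < p * (b - a) * a ^ (-(p+1)) := by
  have hb : 0 < b := lt_trans ha hab
  have hs0 : (a - b)/b < 0 := div_neg_of_neg_of_pos (by linarith) hb
  have hs1 : (-1:ℝ) ≤ (a-b)/b := by
    rw [le_div_iff₀ hb]; linarith
  have hbern : 1 + p * ((a - b)/b) < (1 + (a-b)/b) ^ p :=
    one_add_mul_self_lt_rpow_one_add hs1 (ne_of_lt hs0) hp
  have h1 : (1 : ℝ) + (a-b)/b = a / b := by field_simp; ring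
  rw [h1, Real.div_rpow ha.le hb.le] at hbern
  have hap : (0:ℝ) < a ^ p := Real.rpow_pos_of_pos ha p
  have hbp : (0:ℝ) < b ^ p := Real.rpow_pos_of_pos hb p
  have hna : a ^ (-p) = (a ^ p)⁻¹ := Real.rpow_neg ha.le p
  have hnb : b ^ (-p) = (b ^ p)⁻¹ := Real.rpow_neg hb.le p
  have hna1 : a ^ (-(p+1)) = (a ^ p)⁻¹ * a⁻¹ := by
    rw [show -(p+1) = -p + (-1) by ring, Real.rpow_add ha, Real.rpow_neg_one, hna]
  rw [hna, hnb, hna1]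
  have h2 : (1 + p*((a-b)/b)) * (a^p)⁻¹ < (a^p/b^p) * (a^p)⁻¹ :=
    mul_lt_mul_of_pos_right hbern (by positivity)
  have h3 : (a^p/b^p) * (a^p)⁻¹ = (b^p)⁻¹ := by field_simp
  have h5 : p*(b-a)/b*(a^p)⁻¹ < p*(b-a)*((a^p)⁻¹ * a⁻¹) := by
    have hba : b⁻¹ < a⁻¹ := inv_strictAnti₀ ha hab
    calc p*(b-a)/b*(a^p)⁻¹ = p*(b-a)*(a^p)⁻¹ * b⁻¹ := by ring
      _ < p*(b-a)*(a^p)⁻¹ * a⁻¹ := by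
          apply mul_lt_mul_of_pos_left hba
          have hba2 : 0 < b - a := sub_pos.mpr hab
          positivity
      _ = p*(b-a)*((a^p)⁻¹ * a⁻¹) := by ring
  have h4 : (1 + p*((a-b)/b)) * (a^p)⁻¹ = (a^p)⁻¹ - p*(b-a)/b*(a^p)⁻¹ := by ring
  linarith

lemma le_rpow_of_log {a b c : ℝ} (ha : 0 < a) (hb : 0 < b) (h : Real.log a ≤ c * Real.log b) :
    a ≤ b ^ c := by
  rw [← Real.exp_log ha, Real.rpow_def_of_pos hb]
  exact Real.exp_le_exp.mpr (by linarith [mul_comm c (Real.log b)])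

lemma rpow_le_of_log {a b c : ℝ} (ha : 0 < a) (hb : 0 < b) (h : c * Real.log b ≤ Real.log a) :
    b ^ c ≤ a := by
  rw [← Real.exp_log ha, Real.rpow_def_of_pos hb]
  exact Real.exp_le_exp.mpr (by linarith [mul_comm c (Real.log b)])

section
variable {α : ℝ} (hα1 : 1 < α) (hα2 : α < 2)
include hα1 hα2

-- base upper: (4-α)/(α+6) ≤ ((α+6)/(α+8))^(α+1)
lemma ineq_base_up : (4 - α)/(α + 6) ≤ ((α + 6)/(α + 8)) ^ (α + 1) := by
  apply le_rpow_of_log (div_pos (by linarith) (by linarith)) (div_pos (by linarith) (by linarith))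
  rw [Real.log_div (by linarith : (0:ℝ) < 4 - α).ne' (by linarith : (0:ℝ) < α + 6).ne',
    Real.log_div (by linarith : (0:ℝ) < α + 6).ne' (by linarith : (0:ℝ) < α + 8).ne']
  have h1 : Real.log (α+8) - Real.log (α+6) ≤ ((α+8) - (α+6))/(α+6) :=
    log_sub_le_crude (by linarith) (by linarith)
  have h2 : ((α+6) - (4-α))/(α+6) ≤ Real.log (α+6) - Real.log (4-α) :=
    log_sub_ge_crude (by linarith) (by linarith)
  have h3 := mul_le_mul_of_nonneg_left h1 (show (0:ℝ) ≤ α + 1 by linarith)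
  have e1 : (α+1) * (((α+8) - (α+6))/(α+6)) = (2*α+2)/(α+6) := by ring
  have e2 : ((α+6) - (4-α))/(α+6) = (2*α+2)/(α+6) := by ring
  nlinarith [h3, h2, e1, e2]

-- step upper (t real ≥ 3): (t-α/2)/(t+α/2+1) ≤ ((α+2t+2)/(α+2t+4))^(α+1)
lemma ineq_step_up {t : ℝ} (ht : 3 ≤ t) :
    (t - α/2)/(t + α/2 + 1) ≤ ((α + 2*t + 2)/(α + 2*t + 4)) ^ (α + 1) := by
  have hr : (t - α/2)/(t + α/2 + 1) = (2*t - α)/(α + 2*t + 2) := by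
    rw [div_eq_div_iff (by linarith) (by linarith)]; ring
  rw [hr]
  apply le_rpow_of_log (div_pos (by linarith) (by linarith)) (div_pos (by linarith) (by linarith))
  rw [Real.log_div (by linarith : (0:ℝ) < 2*t - α).ne' (by linarith : (0:ℝ) < α + 2*t + 2).ne',
    Real.log_div (by linarith : (0:ℝ) < α + 2*t + 2).ne' (by linarith : (0:ℝ) < α + 2*t + 4).ne']
  have h1 : Real.log (α+2*t+4) - Real.log (α+2*t+2) ≤ ((α+2*t+4) - (α+2*t+2))/(α+2*t+2) :=
    log_sub_le_crude (by linarith) (by linarith)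
  have h2 : ((α+2*t+2) - (2*t-α))/(α+2*t+2) ≤ Real.log (α+2*t+2) - Real.log (2*t-α) :=
    log_sub_ge_crude (by linarith) (by linarith)
  have h3 := mul_le_mul_of_nonneg_left h1 (show (0:ℝ) ≤ α + 1 by linarith)
  have e1 : (α+1) * (((α+2*t+4) - (α+2*t+2))/(α+2*t+2)) = (2*α+2)/(α+2*t+2) := by ring
  have e2 : ((α+2*t+2) - (2*t-α))/(α+2*t+2) = (2*α+2)/(α+2*t+2) := by ring
  nlinarith [h3, h2, e1, e2]

end

section
variable {α : ℝ} (hα1 : 1 < α) (hα2 : α < 2)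
include hα1 hα2

lemma ineq_base_low : ((α + 4)/(α + 6)) ^ (2*α + 2) ≤ (4 - α)/(α + 6) := by
  apply rpow_le_of_log (div_pos (by linarith) (by linarith)) (div_pos (by linarith) (by linarith))
  rw [Real.log_div (by linarith : (0:ℝ) < 4 - α).ne' (by linarith : (0:ℝ) < α + 6).ne',
    Real.log_div (by linarith : (0:ℝ) < α + 4).ne' (by linarith : (0:ℝ) < α + 6).ne']
  set s := Real.sqrt ((4 - α) * (α + 6)) with hsdef
  have hs : (α + 6)/2 ≤ s := by
    rw [hsdef]
    rw [show (α + 6)/2 = Real.sqrt (((α+6)/2)^2) by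
      rw [Real.sqrt_sq (by linarith)]]
    apply Real.sqrt_le_sqrt
    nlinarith
  have hs0 : (0:ℝ) < s := lt_of_lt_of_le (by linarith) hs
  have h1 : Real.log (α+6) - Real.log (4-α) ≤ ((α+6) - (4-α))/s :=
    log_sub_le_sharp (by linarith) (by linarith)
  have h1' : ((α+6) - (4-α))/s ≤ ((α+6) - (4-α))/((α+6)/2) :=
    div_le_div_of_nonneg_left (by linarith) (by linarith) hs
  have h2 : ((α+6) - (α+4))/(α+6) ≤ Real.log (α+6) - Real.log (α+4) :=
    log_sub_ge_crude (by linarith) (by linarith)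
  have h3 := mul_le_mul_of_nonneg_left h2 (show (0:ℝ) ≤ 2*α + 2 by linarith)
  have e0 : (2*α+2) * (Real.log (α+4) - Real.log (α+6))
      = -((2*α+2) * (Real.log (α+6) - Real.log (α+4))) := by ring
  have e1 : (2*α+2) * (((α+6) - (α+4))/(α+6)) = (4*α+4)/(α+6) := by ring
  have e2 : ((α+6) - (4-α))/((α+6)/2) = (4*α+4)/(α+6) := by
    rw [div_eq_div_iff (by linarith) (by linarith)]; ring
  linarith

lemma ineq_step_low {t : ℝ} (ht : 3 ≤ t) :
    ((α + 2*t)/(α + 2*t + 2)) ^ (2*α + 2) ≤ (t - α/2)/(t + α/2 + 1) := by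
  have hr : (t - α/2)/(t + α/2 + 1) = (2*t - α)/(α + 2*t + 2) := by
    rw [div_eq_div_iff (by linarith) (by linarith)]; ring
  rw [hr]
  apply rpow_le_of_log (div_pos (by linarith) (by linarith)) (div_pos (by linarith) (by linarith))
  rw [Real.log_div (by linarith : (0:ℝ) < 2*t - α).ne' (by linarith : (0:ℝ) < α + 2*t + 2).ne',
    Real.log_div (by linarith : (0:ℝ) < α + 2*t).ne' (by linarith : (0:ℝ) < α + 2*t + 2).ne']
  set s := Real.sqrt ((2*t - α) * (α + 2*t + 2)) with hsdef
  have hs : (α + 2*t + 2)/2 ≤ s := by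
    rw [hsdef]
    rw [show (α + 2*t + 2)/2 = Real.sqrt (((α + 2*t + 2)/2)^2) by
      rw [Real.sqrt_sq (by linarith)]]
    apply Real.sqrt_le_sqrt
    nlinarith
  have hs0 : (0:ℝ) < s := lt_of_lt_of_le (by linarith) hs
  have h1 : Real.log (α+2*t+2) - Real.log (2*t-α) ≤ ((α+2*t+2) - (2*t-α))/s :=
    log_sub_le_sharp (by linarith) (by linarith)
  have h1' : ((α+2*t+2) - (2*t-α))/s ≤ ((α+2*t+2) - (2*t-α))/((α+2*t+2)/2) :=
    div_le_div_of_nonneg_left (by linarith) (by linarith) hs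
  have h2 : ((α+2*t+2) - (α+2*t))/(α+2*t+2) ≤ Real.log (α+2*t+2) - Real.log (α+2*t) :=
    log_sub_ge_crude (by linarith) (by linarith)
  have h3 := mul_le_mul_of_nonneg_left h2 (show (0:ℝ) ≤ 2*α + 2 by linarith)
  have e0 : (2*α+2) * (Real.log (α+2*t) - Real.log (α+2*t+2))
      = -((2*α+2) * (Real.log (α+2*t+2) - Real.log (α+2*t))) := by ring
  have e1 : (2*α+2) * (((α+2*t+2) - (α+2*t))/(α+2*t+2)) = (4*α+4)/(α+2*t+2) := by ring
  have e2 : ((α+2*t+2) - (2*t-α))/((α+2*t+2)/2) = (4*α+4)/(α+2*t+2) := by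
    rw [div_eq_div_iff (by linarith) (by linarith)]; ring
  linarith

end

lemma tel_sum (f : ℤ → ℝ) (n : ℤ) :
    ∀ m : ℤ, n ≤ m → ∑ k ∈ Finset.Icc n m, (f k - f (k+1)) = f n - f (m+1) := by
  refine Int.le_induction ?_ ?_
  · simp
  · intro m hm ih
    have hins : Finset.Icc n (m+1) = insert (m+1) (Finset.Icc n m) := by
      ext x
      simp only [Finset.mem_Icc, Finset.mem_insert]
      omega
    have hnotmem : (m+1) ∉ Finset.Icc n m := by simp
    rw [hins, Finset.sum_insert hnotmem, ih]
    ring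

section
variable {α : ℝ} (hα1 : 1 < α) (hα2 : α < 2)


include hα1 hα2

lemma frac_three : -fracCoeff α 3 = Scoeff α * ((4 - α)/(α + 6)) := by
  have h := frac_rec hα1 hα2 2
  norm_num at h
  rw [h, frac_two hα1 hα2]
  have : ((2:ℝ) - α/2)/(2 + α/2 + 1) = (4 - α)/(α + 6) := by
    rw [div_eq_div_iff (by linarith) (by linarith)]; ring
  rw [this]
  ring

lemma keyU : ∀ k : ℤ, 3 ≤ k → -fracCoeff α k ≤ Scoeff α * ((α + 6)/(α + 2*(k:ℝ) + 2)) ^ (α + 1) := by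
  refine Int.le_induction ?_ ?_
  · rw [frac_three hα1 hα2]
    push_cast
    rw [show α + 2*(3:ℝ) + 2 = α + 8 by ring]
    exact mul_le_mul_of_nonneg_left (ineq_base_up hα1 hα2) (Scoeff_pos hα1 hα2).le
  · intro k hk ih
    have hk3 : (3:ℝ) ≤ (k:ℝ) := by exact_mod_cast hk
    have hr : 0 ≤ ((k:ℝ) - α/2)/((k:ℝ) + α/2 + 1) := by
      apply div_nonneg <;> linarith
    have h1 : -fracCoeff α (k+1) = (-fracCoeff α k) * (((k:ℝ) - α/2)/((k:ℝ) + α/2 + 1)) := by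
      rw [frac_rec hα1 hα2 k]; ring
    push_cast
    rw [h1]
    calc (-fracCoeff α k) * (((k:ℝ) - α/2)/((k:ℝ) + α/2 + 1))
        ≤ (Scoeff α * ((α + 6)/(α + 2*(k:ℝ) + 2)) ^ (α + 1)) * (((k:ℝ) - α/2)/((k:ℝ) + α/2 + 1)) :=
          mul_le_mul_of_nonneg_right ih hr
      _ ≤ (Scoeff α * ((α + 6)/(α + 2*(k:ℝ) + 2)) ^ (α + 1)) *
            ((α + 2*(k:ℝ) + 2)/(α + 2*(k:ℝ) + 4)) ^ (α + 1) := by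
          apply mul_le_mul_of_nonneg_left (ineq_step_up hα1 hα2 hk3)
          have hb : (0:ℝ) < (α + 6)/(α + 2*(k:ℝ) + 2) := div_pos (by linarith) (by linarith)
          exact mul_nonneg (Scoeff_pos hα1 hα2).le (Real.rpow_nonneg hb.le _)
      _ = Scoeff α * ((α + 6)/(α + 2*((k:ℝ)+1) + 2)) ^ (α + 1) := by
          rw [mul_assoc, ← Real.mul_rpow (by positivity)
            (div_nonneg (by linarith) (by linarith))]
          congr 2
          rw [div_mul_div_comm, div_eq_div_iff (by nlinarith) (by linarith)]
          ring

lemma keyL : ∀ k : ℤ, 3 ≤ k → Scoeff α * ((α + 4)/(α + 2*(k:ℝ))) ^ (2*α + 2) ≤ -fracCoeff α k := by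
  refine Int.le_induction ?_ ?_
  · rw [frac_three hα1 hα2]
    push_cast
    rw [show α + 2*(3:ℝ) = α + 6 by ring]
    exact mul_le_mul_of_nonneg_left (ineq_base_low hα1 hα2) (Scoeff_pos hα1 hα2).le
  · intro k hk ih
    have hk3 : (3:ℝ) ≤ (k:ℝ) := by exact_mod_cast hk
    have hr : 0 ≤ ((k:ℝ) - α/2)/((k:ℝ) + α/2 + 1) := by
      apply div_nonneg <;> linarith
    have h1 : -fracCoeff α (k+1) = (-fracCoeff α k) * (((k:ℝ) - α/2)/((k:ℝ) + α/2 + 1)) := by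
      rw [frac_rec hα1 hα2 k]; ring
    push_cast
    rw [h1]
    have hb : (0:ℝ) < (α + 4)/(α + 2*(k:ℝ)) := div_pos (by linarith) (by linarith)
    calc Scoeff α * ((α + 4)/(α + 2*((k:ℝ)+1))) ^ (2*α + 2)
        = (Scoeff α * ((α + 4)/(α + 2*(k:ℝ))) ^ (2*α + 2)) *
            ((α + 2*(k:ℝ))/(α + 2*(k:ℝ) + 2)) ^ (2*α + 2) := by
          rw [mul_assoc, ← Real.mul_rpow hb.le (div_nonneg (by linarith) (by linarith))]
          congr 2
          rw [div_mul_div_comm, div_eq_div_iff (by nlinarith) (by nlinarith)]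
          ring
      _ ≤ (Scoeff α * ((α + 4)/(α + 2*(k:ℝ))) ^ (2*α + 2)) *
            (((k:ℝ) - α/2)/((k:ℝ) + α/2 + 1)) := by
          apply mul_le_mul_of_nonneg_left (ineq_step_low hα1 hα2 hk3)
          exact mul_nonneg (Scoeff_pos hα1 hα2).le (Real.rpow_nonneg hb.le _)
      _ ≤ (-fracCoeff α k) * (((k:ℝ) - α/2)/((k:ℝ) + α/2 + 1)) :=
          mul_le_mul_of_nonneg_right ih hr

end

theorem fracCoeff_finite_sum_bound (α : ℝ) (hα1 : 1 < α) (hα2 : α < 2)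
    (n m : ℤ) (hn : 3 ≤ n) (hnm : n ≤ m) :
    Scoeff α * ((α + 2 * (n : ℝ)) ^ (-(2 * α + 1)) - (α + 2 * (m : ℝ) + 2) ^ (-(2 * α + 1)))
        * (α + 4) ^ (2 * (α + 1)) / (2 * (2 * α + 1))
      < ∑ k ∈ Finset.Icc n m, |fracCoeff α k| ∧
    ∑ k ∈ Finset.Icc n m, |fracCoeff α k|
      < Scoeff α * ((α + 2 * (n : ℝ)) ^ (-α) - (α + 2 * (m : ℝ) + 2) ^ (-α))
        * (α + 6) ^ (α + 1) / (2 * α) := by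
  have hS := Scoeff_pos hα1 hα2
  have hne : (Finset.Icc n m).Nonempty := Finset.nonempty_Icc.mpr hnm
  have habs : ∀ k : ℤ, 3 ≤ k → |fracCoeff α k| = -fracCoeff α k := by
    intro k hk
    have h := keyL hα1 hα2 k hk
    have hk3 : (3:ℝ) ≤ (k:ℝ) := by exact_mod_cast hk
    have hb : (0:ℝ) < (α + 4)/(α + 2*(k:ℝ)) := div_pos (by linarith) (by linarith)
    have hpos : 0 < -fracCoeff α k :=
      lt_of_lt_of_le (mul_pos hS (Real.rpow_pos_of_pos hb _)) h
    exact abs_of_neg (by linarith)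
  constructor
  · -- lower bound
    set fL : ℤ → ℝ := fun k => (α + 2*(k:ℝ)) ^ (-(2*α+1)) with hfL
    have htel := tel_sum fL n m hnm
    have hLHS : Scoeff α * ((α + 2 * (n : ℝ)) ^ (-(2 * α + 1)) - (α + 2 * (m : ℝ) + 2) ^ (-(2 * α + 1)))
        * (α + 4) ^ (2 * (α + 1)) / (2 * (2 * α + 1))
        = ∑ k ∈ Finset.Icc n m,
          (Scoeff α * (α + 4) ^ (2 * (α + 1)) / (2 * (2 * α + 1)) * (fL k - fL (k+1))) := by
      rw [← Finset.mul_sum, htel]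
      have e1 : fL n = (α + 2 * (n : ℝ)) ^ (-(2 * α + 1)) := rfl
      have e2 : fL (m+1) = (α + 2 * (m : ℝ) + 2) ^ (-(2 * α + 1)) := by
        rw [hfL]; push_cast; ring_nf
      rw [e1, e2]; ring
    rw [hLHS]
    apply Finset.sum_lt_sum_of_nonempty hne
    intro k hk
    have hk3 : 3 ≤ k := le_trans hn (Finset.mem_Icc.mp hk).1
    have hk3r : (3:ℝ) ≤ (k:ℝ) := by exact_mod_cast hk3
    rw [habs k hk3]
    have hdiff : fL k - fL (k+1) < (2*α+1) * 2 * (α + 2*(k:ℝ)) ^ (-((2*α+1)+1)) := by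
      have h := rpow_diff_lt (a := α + 2*(k:ℝ)) (b := α + 2*(k:ℝ) + 2) (p := 2*α+1)
        (by linarith) (by linarith) (by linarith)
      show (α + 2*(k:ℝ)) ^ (-(2*α+1)) - (α + 2*(((k+1):ℤ):ℝ)) ^ (-(2*α+1)) < _
      rw [show (α + 2*(((k+1):ℤ):ℝ)) = α + 2*(k:ℝ) + 2 by push_cast; ring]
      simpa using h
    have hcL : (0:ℝ) < Scoeff α * (α + 4) ^ (2 * (α + 1)) / (2 * (2 * α + 1)) := by
      have : (0:ℝ) < (α + 4) ^ (2 * (α + 1)) := Real.rpow_pos_of_pos (by linarith) _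
      positivity
    calc Scoeff α * (α + 4) ^ (2 * (α + 1)) / (2 * (2 * α + 1)) * (fL k - fL (k+1))
        < Scoeff α * (α + 4) ^ (2 * (α + 1)) / (2 * (2 * α + 1)) *
            ((2*α+1) * 2 * (α + 2*(k:ℝ)) ^ (-((2*α+1)+1))) := by
          exact mul_lt_mul_of_pos_left hdiff hcL
      _ = Scoeff α * ((α + 4)/(α + 2*(k:ℝ))) ^ (2*α + 2) := by
          have hx : (0:ℝ) < α + 2*(k:ℝ) := by linarith
          have e4 : ((α + 4)/(α + 2*(k:ℝ))) ^ (2*α + 2)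
              = (α + 4) ^ (2*α+2) * (α + 2*(k:ℝ)) ^ (-(2*α+2)) := by
            rw [Real.div_rpow (by linarith) hx.le, Real.rpow_neg hx.le, div_eq_mul_inv]
          rw [e4, show -((2*α+1)+1) = -(2*α+2) by ring, show (2:ℝ) * (α+1) = 2*α+2 by ring]
          field_simp
      _ ≤ -fracCoeff α k := keyL hα1 hα2 k hk3
  · -- upper bound
    set fU : ℤ → ℝ := fun k => (α + 2*(k:ℝ)) ^ (-α) with hfU
    have htel := tel_sum fU n m hnm
    have hRHS : Scoeff α * ((α + 2 * (n : ℝ)) ^ (-α) - (α + 2 * (m : ℝ) + 2) ^ (-α))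
        * (α + 6) ^ (α + 1) / (2 * α)
        = ∑ k ∈ Finset.Icc n m,
          (Scoeff α * (α + 6) ^ (α + 1) / (2 * α) * (fU k - fU (k+1))) := by
      rw [← Finset.mul_sum, htel]
      have e2 : fU (m+1) = (α + 2 * (m : ℝ) + 2) ^ (-α) := by
        rw [hfU]; push_cast; ring_nf
      rw [show fU n = (α + 2 * (n : ℝ)) ^ (-α) from rfl, e2]; ring
    rw [hRHS]
    apply Finset.sum_lt_sum_of_nonempty hne
    intro k hk
    have hk3 : 3 ≤ k := le_trans hn (Finset.mem_Icc.mp hk).1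
    have hk3r : (3:ℝ) ≤ (k:ℝ) := by exact_mod_cast hk3
    rw [habs k hk3]
    have hdiff : α * 2 * (α + 2*(k:ℝ) + 2) ^ (-(α+1)) < fU k - fU (k+1) := by
      have h := rpow_diff_gt (a := α + 2*(k:ℝ)) (b := α + 2*(k:ℝ) + 2) (p := α)
        (by linarith) (by linarith) hα1
      show _ < (α + 2*(k:ℝ)) ^ (-α) - (α + 2*(((k+1):ℤ):ℝ)) ^ (-α)
      rw [show (α + 2*(((k+1):ℤ):ℝ)) = α + 2*(k:ℝ) + 2 by push_cast; ring]
      simpa using h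
    have hcU : (0:ℝ) < Scoeff α * (α + 6) ^ (α + 1) / (2 * α) := by
      have : (0:ℝ) < (α + 6) ^ (α + 1) := Real.rpow_pos_of_pos (by linarith) _
      positivity
    calc -fracCoeff α k
        ≤ Scoeff α * ((α + 6)/(α + 2*(k:ℝ) + 2)) ^ (α + 1) := keyU hα1 hα2 k hk3
      _ = Scoeff α * (α + 6) ^ (α + 1) / (2 * α) * (α * 2 * (α + 2*(k:ℝ) + 2) ^ (-(α+1))) := by
          have hx : (0:ℝ) < α + 2*(k:ℝ) + 2 := by linarith
          have e4 : ((α + 6)/(α + 2*(k:ℝ) + 2)) ^ (α + 1)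
              = (α + 6) ^ (α+1) * (α + 2*(k:ℝ) + 2) ^ (-(α+1)) := by
            rw [Real.div_rpow (by linarith) hx.le, Real.rpow_neg hx.le, div_eq_mul_inv]
          rw [e4]
          field_simp
      _ < Scoeff α * (α + 6) ^ (α + 1) / (2 * α) * (fU k - fU (k+1)) :=
          mul_lt_mul_of_pos_left hdiff hcU
end

section
/- For every real α with 1 < α < 2, the two-sided infinite sum of absolute values of the fractional centred difference coefficients over all nonzero integers k satisfies 2^{1+α}/((1+α)·π) ≤ Σ_{k∈ℤ, k≠0} |g_k^{(α)}| ≤ 2^{1+α}/π. -/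
open Real

set_option maxHeartbeats 1000000

/-- Key Gamma-function inequality, from log-convexity: `√π/2 · Γ(x) ≤ Γ(x + 1/2)` for `x ≥ 1`. -/
lemma gamma_half_step {x : ℝ} (hx : 1 ≤ x) : √π / 2 * Real.Gamma x ≤ Real.Gamma (x + 1/2) := by
  have h32 : Real.Gamma (3/2 : ℝ) = √π / 2 := by
    have : Real.Gamma ((1:ℝ)/2 + 1) = (1/2) * Real.Gamma (1/2) := Real.Gamma_add_one (by norm_num)
    rw [show (3/2 : ℝ) = 1/2 + 1 by norm_num, this, Real.Gamma_one_half_eq]; ring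
  rcases eq_or_lt_of_le hx with rfl | hx1
  · rw [Real.Gamma_one, show (1:ℝ) + 1/2 = 3/2 by norm_num, h32]; linarith
  have hf := Real.convexOn_log_Gamma
  set f : ℝ → ℝ := log ∘ Real.Gamma with hfdef
  have hden : (0:ℝ) < x - 1/2 := by linarith
  set l : ℝ := (x - 1) / (x - 1/2) with hl
  set m : ℝ := (1/2) / (x - 1/2) with hm
  have hl0 : 0 ≤ l := div_nonneg (by linarith) (by linarith)
  have hm0 : 0 ≤ m := div_nonneg (by norm_num) (by linarith)
  have hsum : l + m = 1 := by
    rw [hl, hm, ← add_div, div_eq_one_iff_eq hden.ne']; ring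
  have hx12 : (0:ℝ) < x + 1/2 := by linarith
  have hA := hf.2 (Set.mem_Ioi.2 one_pos) (Set.mem_Ioi.2 hx12) hl0 hm0 hsum
  have hB := hf.2 (Set.mem_Ioi.2 one_pos) (Set.mem_Ioi.2 hx12) hm0 hl0 (by linarith)
  have e1 : l • (1:ℝ) + m • (x + 1/2) = 3/2 := by
    simp only [smul_eq_mul, hl, hm, div_mul_eq_mul_div, ← add_div]
    rw [div_eq_iff hden.ne']; ring
  have e2 : m • (1:ℝ) + l • (x + 1/2) = x := by
    simp only [smul_eq_mul, hl, hm, div_mul_eq_mul_div, ← add_div]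
    rw [div_eq_iff hden.ne']; ring
  rw [e1] at hA
  rw [e2] at hB
  simp only [smul_eq_mul] at hA hB
  have hadd : f (3/2) + f x ≤ f 1 + f (x + 1/2) := by
    have hcomb : l * f 1 + m * f (x + 1/2) + (m * f 1 + l * f (x + 1/2))
        = f 1 + f (x + 1/2) := by linear_combination (f 1 + f (x + 1/2)) * hsum
    linarith
  have hΓ1 : Real.Gamma (1:ℝ) = 1 := Real.Gamma_one
  have hp32 : (0:ℝ) < Real.Gamma (3/2) := Real.Gamma_pos_of_pos (by norm_num)
  have hpx : (0:ℝ) < Real.Gamma x := Real.Gamma_pos_of_pos (by linarith)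
  have hpx2 : (0:ℝ) < Real.Gamma (x + 1/2) := Real.Gamma_pos_of_pos (by linarith)
  have hlog : log (Real.Gamma (3/2) * Real.Gamma x) ≤ log (Real.Gamma (x + 1/2)) := by
    rw [log_mul hp32.ne' hpx.ne']
    simpa [hfdef, Function.comp, hΓ1] using hadd
  have := (log_le_log_iff (by positivity) hpx2).1 hlog
  calc √π / 2 * Real.Gamma x = Real.Gamma (3/2) * Real.Gamma x := by rw [h32]
    _ ≤ Real.Gamma (x + 1/2) := this

lemma fracCoeff_neg (α : ℝ) (m : ℤ) : fracCoeff α (-m) = fracCoeff α m := by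
  unfold fracCoeff
  have h1 : ((-1 : ℝ)) ^ (-m) = ((-1 : ℝ)) ^ m := by
    rw [zpow_neg]
    refine inv_eq_of_mul_eq_one_right ?_
    rw [← zpow_add₀ (by norm_num : (-1:ℝ) ≠ 0), ← two_mul, zpow_mul]
    norm_num
  rw [h1]
  push_cast
  ring_nf

lemma sin_half_pos {α : ℝ} (hα1 : 1 < α) (hα2 : α < 2) : 0 < Real.sin (π * (α / 2)) :=
  Real.sin_pos_of_pos_of_lt_pi (by positivity) (mul_lt_of_lt_one_right pi_pos (by linarith))

lemma fracCoeff_succ_eq (α : ℝ) (hα1 : 1 < α) (hα2 : α < 2) (n : ℕ) :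
    fracCoeff α ((n : ℤ) + 1) =
      -(Real.Gamma (α + 1) * Real.sin (π * (α / 2)) / π *
        (Real.Gamma ((n : ℝ) + 1 - α / 2) / Real.Gamma ((n : ℝ) + 2 + α / 2))) := by
  have hsin : 0 < Real.sin (π * (α / 2)) := sin_half_pos hα1 hα2
  have hG1 : 0 < Real.Gamma ((n : ℝ) + 1 - α / 2) := Real.Gamma_pos_of_pos (by
    have : (0:ℝ) ≤ n := Nat.cast_nonneg n
    linarith)
  have hrefl := Real.Gamma_mul_Gamma_one_sub (α / 2 - ((n : ℝ) + 1) + 1)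
  have heq1 : (1 : ℝ) - (α / 2 - ((n : ℝ) + 1) + 1) = (n : ℝ) + 1 - α / 2 := by ring
  rw [heq1] at hrefl
  have hs := Real.sin_add_int_mul_pi (π * (α / 2)) (-(n : ℤ))
  have harg : π * (α / 2 - ((n : ℝ) + 1) + 1) = π * (α / 2) + (Int.cast (-(n:ℤ)) : ℝ) * π := by
    push_cast; ring
  rw [harg, hs] at hrefl
  have hpow : ((-1 : ℝ)) ^ (-(n : ℤ)) = ((-1 : ℝ)) ^ n := by
    rw [zpow_neg, ← inv_zpow, inv_neg, inv_one, zpow_natCast]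
  rw [hpow] at hrefl
  have hπ : (π:ℝ) ≠ 0 := pi_ne_zero
  have hA : Real.Gamma ((n : ℝ) + 1 - α / 2) ≠ 0 := hG1.ne'
  have hB : (0:ℝ) < Real.Gamma ((n:ℝ) + 2 + α / 2) := Real.Gamma_pos_of_pos (by positivity)
  have hcast : (((n : ℤ) + 1 : ℤ) : ℝ) = (n : ℝ) + 1 := by push_cast; ring
  have hzp : ((-1 : ℝ)) ^ ((n : ℤ) + 1) = (-1 : ℝ) ^ (n + 1 : ℕ) := by
    rw [show ((n : ℤ) + 1) = ((n + 1 : ℕ) : ℤ) by push_cast; ring, zpow_natCast]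
  unfold fracCoeff
  rw [hcast, hzp,
    show α / 2 + ((n:ℝ) + 1) + 1 = (n:ℝ) + 2 + α / 2 by ring, pow_succ]
  have hXval : Real.Gamma (α / 2 - ((n : ℝ) + 1) + 1) =
      (π / ((-1:ℝ) ^ n * Real.sin (π * (α / 2)))) / Real.Gamma ((n : ℝ) + 1 - α / 2) :=
    eq_div_of_mul_eq hA hrefl
  rw [hXval]
  rcases Nat.even_or_odd n with hpar | hpar
  · rw [hpar.neg_one_pow]
    field_simp
  · rw [hpar.neg_one_pow]
    field_simp

theorem fracCoeff_two_sided_infinite_sum_bound (α : ℝ) (hα1 : 1 < α) (hα2 : α < 2) :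
    2 ^ (1 + α) / ((1 + α) * π) ≤ ∑' k : {k : ℤ // k ≠ 0}, |fracCoeff α k| ∧
    ∑' k : {k : ℤ // k ≠ 0}, |fracCoeff α k| ≤ 2 ^ (1 + α) / π := by
  have hsin : 0 < Real.sin (π * (α / 2)) := sin_half_pos hα1 hα2
  have hΓα : (0:ℝ) < Real.Gamma (α + 1) := Real.Gamma_pos_of_pos (by linarith)
  set C : ℝ := Real.Gamma (α + 1) * Real.sin (π * (α / 2)) / π with hC
  have hCpos : 0 < C := by rw [hC]; positivity
  set a : ℕ → ℝ := fun n => Real.Gamma ((n:ℝ) + 1 - α/2) / Real.Gamma ((n:ℝ) + 1 + α/2) with ha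
  have hnum : ∀ n : ℕ, (0:ℝ) < Real.Gamma ((n:ℝ) + 1 - α/2) := fun n =>
    Real.Gamma_pos_of_pos (by have : (0:ℝ) ≤ n := Nat.cast_nonneg n; linarith)
  have hden : ∀ n : ℕ, (0:ℝ) < Real.Gamma ((n:ℝ) + 1 + α/2) := fun n =>
    Real.Gamma_pos_of_pos (by positivity)
  have hapos : ∀ n, 0 < a n := fun n => div_pos (hnum n) (hden n)
  -- recurrence
  have hrec : ∀ n : ℕ, a (n+1) = a n * (((n:ℝ) + 1 - α/2) / ((n:ℝ) + 1 + α/2)) := by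
    intro n
    have h1 : Real.Gamma (((n:ℝ)+1) + 1 - α/2) = ((n:ℝ) + 1 - α/2) * Real.Gamma ((n:ℝ) + 1 - α/2) := by
      rw [show ((n:ℝ)+1) + 1 - α/2 = ((n:ℝ) + 1 - α/2) + 1 by ring]
      exact Real.Gamma_add_one (show (0:ℝ) < (n:ℝ) + 1 - α/2 by
        have h0 : (0:ℝ) ≤ n := n.cast_nonneg; linarith).ne'
    have h2 : Real.Gamma (((n:ℝ)+1) + 1 + α/2) = ((n:ℝ) + 1 + α/2) * Real.Gamma ((n:ℝ) + 1 + α/2) := by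
      rw [show ((n:ℝ)+1) + 1 + α/2 = ((n:ℝ) + 1 + α/2) + 1 by ring]
      exact Real.Gamma_add_one (show (0:ℝ) < (n:ℝ) + 1 + α/2 by
        have h0 : (0:ℝ) ≤ n := n.cast_nonneg; linarith).ne'
    have hc : ((n+1 : ℕ) : ℝ) = (n:ℝ) + 1 := by push_cast; ring
    rw [ha]
    simp only [hc]
    rw [h1, h2]
    field_simp
  -- the coefficients in terms of a
  have hcoeff : ∀ n : ℕ, |fracCoeff α ((n:ℤ) + 1)| = C / α * (a n - a (n+1)) := by
    intro n
    have h2 : Real.Gamma ((n:ℝ) + 2 + α/2) = ((n:ℝ) + 1 + α/2) * Real.Gamma ((n:ℝ) + 1 + α/2) := by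
      rw [show (n:ℝ) + 2 + α/2 = ((n:ℝ) + 1 + α/2) + 1 by ring]
      exact Real.Gamma_add_one (show (0:ℝ) < (n:ℝ) + 1 + α/2 by
        have h0 : (0:ℝ) ≤ n := n.cast_nonneg; linarith).ne'
    have hB2 : (0:ℝ) < Real.Gamma ((n:ℝ) + 2 + α/2) := Real.Gamma_pos_of_pos (by positivity)
    have hnn : (0:ℝ) ≤ Real.Gamma (α + 1) * Real.sin (π * (α / 2)) / π *
        (Real.Gamma ((n : ℝ) + 1 - α / 2) / Real.Gamma ((n : ℝ) + 2 + α / 2)) :=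
      mul_nonneg (div_nonneg (mul_nonneg hΓα.le hsin.le) pi_pos.le)
        (div_nonneg (hnum n).le hB2.le)
    rw [fracCoeff_succ_eq α hα1 hα2 n, abs_neg, abs_of_nonneg hnn, hrec n, ha, ← hC]
    simp only
    rw [h2]
    have hd1 : ((n:ℝ) + 1 + α/2) ≠ 0 := by positivity
    have hα0 : α ≠ 0 := by linarith
    have hπ : (π:ℝ) ≠ 0 := pi_ne_zero
    field_simp [hπ, hα0, hd1, hsin.ne', (hnum n).ne', (hden n).ne']
    ring
  -- a n - a (n+1) is nonneg
  have hmono : ∀ n, a (n+1) ≤ a n := by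
    intro n
    rw [hrec n]
    have h1 : ((n:ℝ) + 1 - α/2) / ((n:ℝ) + 1 + α/2) ≤ 1 := by
      rw [div_le_one (by positivity)]; linarith
    nlinarith [hapos n]
  -- bound a n ≤ a 0 / (n+1)
  have hbound : ∀ n : ℕ, a n ≤ a 0 / ((n:ℝ) + 1) := by
    intro n
    induction n with
    | zero => simp
    | succ n ih =>
      rw [hrec n]
      have hr1 : ((n:ℝ) + 1 - α/2) / ((n:ℝ) + 1 + α/2) ≤ ((n:ℝ)+1) / ((n:ℝ)+2) := by
        rw [div_le_div_iff₀ (by positivity) (by positivity)]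
        nlinarith [Nat.cast_nonneg (α := ℝ) n]
      have hr0 : 0 ≤ ((n:ℝ) + 1 - α/2) / ((n:ℝ) + 1 + α/2) := by
        apply div_nonneg _ (by positivity)
        have : (0:ℝ) ≤ n := Nat.cast_nonneg n
        linarith
      calc a n * (((n:ℝ) + 1 - α/2) / ((n:ℝ) + 1 + α/2))
          ≤ (a 0 / ((n:ℝ) + 1)) * (((n:ℝ)+1) / ((n:ℝ)+2)) := by
            exact mul_le_mul ih hr1 hr0 (div_nonneg (hapos 0).le (by positivity))
        _ = a 0 / (((n:ℕ)+1:ℕ) + 1) := by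
            push_cast
            rw [div_mul_div_comm, div_eq_div_iff (by positivity) (by positivity)]
            ring
  -- tendsto 0
  have hlim : Filter.Tendsto a Filter.atTop (nhds 0) := by
    apply squeeze_zero (fun n => (hapos n).le) hbound
    have h2 : Filter.Tendsto (fun n : ℕ => ((n:ℝ) + 1)) Filter.atTop Filter.atTop :=
      Filter.tendsto_atTop_add_const_right _ 1 tendsto_natCast_atTop_atTop
    simpa using (tendsto_const_nhds (x := a 0)).div_atTop h2
  -- telescoping sum
  have htel : HasSum (fun n : ℕ => a n - a (n+1)) (a 0) := by
    rw [hasSum_iff_tendsto_nat_of_nonneg (fun n => by linarith [hmono n]) (a 0)]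
    have : ∀ n : ℕ, ∑ i ∈ Finset.range n, (a i - a (i+1)) = a 0 - a n := fun n =>
      Finset.sum_range_sub' a n
    simp only [this]
    simpa using (tendsto_const_nhds (x := a 0)).sub hlim
  have hS : HasSum (fun n : ℕ => |fracCoeff α ((n:ℤ) + 1)|) (C / α * a 0) := by
    have := htel.mul_left (C / α)
    refine this.congr_fun fun n => ?_
    rw [hcoeff n]
  -- sum over nonzero integers via indicator
  set F : ℤ → ℝ := fun k => |fracCoeff α k| with hF
  have hind : HasSum (Set.indicator {k : ℤ | k ≠ 0} F) (C / α * a 0 + C / α * a 0) := by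
    apply HasSum.of_nat_of_neg_add_one
    · have h0 : (Set.indicator {k : ℤ | k ≠ 0} F) ((0:ℕ):ℤ) = 0 := by
        simp [Set.indicator]
      have h1 : HasSum (fun n : ℕ => (Set.indicator {k : ℤ | k ≠ 0} F) ((n + 1 : ℕ) : ℤ))
          (C / α * a 0) := by
        refine hS.congr_fun fun n => ?_
        rw [Set.indicator_of_mem (by
          simp only [Set.mem_setOf_eq]; exact_mod_cast Nat.succ_ne_zero n)]
        rw [hF]
        norm_num
      have := (hasSum_nat_add_iff (f := fun n : ℕ => (Set.indicator {k : ℤ | k ≠ 0} F) ((n:ℕ):ℤ)) 1).1 h1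
      simpa [h0] using this
    · refine hS.congr_fun fun n => ?_
      rw [Set.indicator_of_mem (by simp; omega : (-((n:ℤ) + 1)) ∈ {k : ℤ | k ≠ 0})]
      rw [hF]
      simp only
      rw [fracCoeff_neg]
  have hsubsum : HasSum (fun k : {k : ℤ // k ≠ 0} => |fracCoeff α k|) (C / α * a 0 + C / α * a 0) := by
    rw [show (fun k : {k : ℤ // k ≠ 0} => |fracCoeff α k|)
        = (F ∘ ((↑) : {k : ℤ | k ≠ 0} → ℤ)) from rfl]
    exact hasSum_subtype_iff_indicator.2 hind
  have htsum : ∑' k : {k : ℤ // k ≠ 0}, |fracCoeff α k| = C / α * a 0 + C / α * a 0 :=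
    hsubsum.tsum_eq
  -- evaluate the closed form: 2 * (C/α) * a 0 = Γ(α+1)/Γ(α/2+1)^2
  have hΓh : 0 < Real.Gamma (α/2) := Real.Gamma_pos_of_pos (by linarith)
  have hΓh1 : Real.Gamma (α/2 + 1) = (α/2) * Real.Gamma (α/2) :=
    Real.Gamma_add_one (show (0:ℝ) < α/2 by linarith).ne'
  have hrefl0 : Real.Gamma (α/2) * Real.Gamma (1 - α/2) = π / Real.sin (π * (α/2)) :=
    Real.Gamma_mul_Gamma_one_sub (α/2)
  have hΓ1m : Real.Gamma (1 - α/2) = π / Real.sin (π * (α/2)) / Real.Gamma (α/2) :=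
    eq_div_of_mul_eq hΓh.ne' (by linarith [hrefl0])
  have ha0 : a 0 = Real.Gamma (1 - α/2) / Real.Gamma (1 + α/2) := by
    simp only [ha, Nat.cast_zero, zero_add]
  have hval : C / α * a 0 + C / α * a 0 = Real.Gamma (α + 1) / (Real.Gamma (α/2 + 1))^2 := by
    have hα0 : (0:ℝ) < α := by linarith
    have hα2' : (0:ℝ) < α/2 := by linarith
    have hX : C / α * a 0 =
        (Real.Gamma (α+1) * Real.sin (π*(α/2)) * π) /
          ((π * α) * (Real.sin (π*(α/2)) * (Real.Gamma (α/2) * (α/2 * Real.Gamma (α/2))))) := by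
      rw [hC, ha0, hΓ1m, show (1:ℝ)+α/2 = α/2+1 by ring, hΓh1, div_div, div_div, div_div,
        div_mul_div_comm]
    have hd : (0:ℝ) < (π * α) *
        (Real.sin (π*(α/2)) * (Real.Gamma (α/2) * (α/2 * Real.Gamma (α/2)))) :=
      mul_pos (mul_pos pi_pos hα0)
        (mul_pos hsin (mul_pos hΓh (mul_pos hα2' hΓh)))
    have hne2 : ((α/2) * Real.Gamma (α/2))^2 ≠ 0 :=
      (pow_pos (mul_pos hα2' hΓh) 2).ne'
    rw [hΓh1, hX, ← add_div, div_eq_div_iff hd.ne' hne2]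
    ring
  rw [htsum, hval]
  -- duplication formula
  set x : ℝ := (α + 1) / 2 with hx
  have hxge : (1:ℝ) ≤ x := by rw [hx]; linarith
  have hdup := Real.Gamma_mul_Gamma_add_half x
  have hxx : 2 * x = α + 1 := by rw [hx]; ring
  have hx12 : x + 1/2 = α/2 + 1 := by rw [hx]; ring
  rw [hxx, hx12] at hdup
  -- hdup : Γ x * Γ (α/2+1) = Γ (α+1) * 2^(1-(α+1)) * √π
  have h2pow : (2:ℝ) ^ (1 - (α+1)) = 2 / 2 ^ (1 + α) := by
    rw [show (1:ℝ) - (α+1) = 1 - (1+α) by ring, Real.rpow_sub two_pos, Real.rpow_one]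
  have hsqrtπ : (0:ℝ) < √π := Real.sqrt_pos.2 pi_pos
  have hΓx : 0 < Real.Gamma x := Real.Gamma_pos_of_pos (by linarith)
  have hΓαh : 0 < Real.Gamma (α/2 + 1) := Real.Gamma_pos_of_pos (by linarith)
  have h2p : (0:ℝ) < (2:ℝ) ^ (1 + α) := Real.rpow_pos_of_pos two_pos _
  have hπpos := pi_pos
  have hsq : √π * √π = π := Real.mul_self_sqrt pi_pos.le
  -- Γ(α+1) = Γ x * Γ(α/2+1) * 2^(1+α) / (2 √π)
  have hΓα1 : Real.Gamma (α + 1) = Real.Gamma x * Real.Gamma (α/2+1) * (2:ℝ)^(1+α) / (2 * √π) := by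
    rw [hdup, h2pow]
    field_simp
  constructor
  · -- lower bound
    have hkey := gamma_half_step (x := α/2 + 1) (by linarith)
    have hid : Real.Gamma (α/2 + 1 + 1/2) = x * Real.Gamma x := by
      rw [show α/2 + 1 + 1/2 = x + 1 by rw [hx]; ring]
      exact Real.Gamma_add_one (show (0:ℝ) < x by rw [hx]; linarith).ne'
    rw [hid] at hkey
    have hx2 : 2 * x = 1 + α := by rw [hx]; ring
    have hkey2 : √π * Real.Gamma (α/2+1) ≤ (1+α) * Real.Gamma x := by
      calc √π * Real.Gamma (α/2+1) = 2 * (√π/2 * Real.Gamma (α/2+1)) := by ring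
        _ ≤ 2 * (x * Real.Gamma x) := by linarith
        _ = (1+α) * Real.Gamma x := by rw [← hx2]; ring
    rw [div_le_div_iff₀ (mul_pos (by linarith : (0:ℝ) < 1 + α) hπpos) (pow_pos hΓαh 2)]
    have h3 : 2*√π*Real.Gamma (α/2+1) ≤ (1+α)*π*Real.Gamma x := by
      have hge2 : (2:ℝ) ≤ π := Real.two_le_pi
      have hmm := mul_le_mul_of_nonneg_right hge2 (mul_nonneg hsqrtπ.le hΓαh.le)
      have hmm2 := mul_le_mul_of_nonneg_left hkey2 hπpos.le
      calc 2*√π*Real.Gamma (α/2+1) ≤ π*(√π*Real.Gamma (α/2+1)) := by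
            rw [mul_assoc]; exact hmm
        _ ≤ π*((1+α)*Real.Gamma x) := hmm2
        _ = (1+α)*π*Real.Gamma x := by ring
    have step : 2*√π * ((2:ℝ)^(1+α) * Real.Gamma (α/2+1)^2) ≤
        ((1+α)*π) * (Real.Gamma x * Real.Gamma (α/2+1) * (2:ℝ)^(1+α)) := by
      calc 2*√π*((2:ℝ)^(1+α)*Real.Gamma (α/2+1)^2)
          = (2*√π*Real.Gamma (α/2+1)) * ((2:ℝ)^(1+α)*Real.Gamma (α/2+1)) := by ring
        _ ≤ ((1+α)*π*Real.Gamma x) * ((2:ℝ)^(1+α)*Real.Gamma (α/2+1)) :=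
            mul_le_mul_of_nonneg_right h3 (by positivity)
        _ = ((1+α)*π) * (Real.Gamma x * Real.Gamma (α/2+1) * (2:ℝ)^(1+α)) := by ring
    rw [hΓα1, div_mul_eq_mul_div, le_div_iff₀ (by positivity)]
    linarith [step]
  · -- upper bound
    have hkey := gamma_half_step hxge
    rw [hx12] at hkey
    have h1 : √π * Real.Gamma x ≤ 2 * Real.Gamma (α/2+1) := by linarith
    rw [hΓα1, div_div,
      div_le_div_iff₀ (mul_pos (by positivity : (0:ℝ) < 2 * √π) (pow_pos hΓαh 2)) hπpos]
    calc Real.Gamma x * Real.Gamma (α/2+1) * (2:ℝ)^(1+α) * π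
        = (√π * Real.Gamma x) * (Real.Gamma (α/2+1) * (2:ℝ)^(1+α)) * √π := by
          linear_combination (Real.Gamma x * Real.Gamma (α/2+1) * (2:ℝ)^(1+α)) * hsq.symm
      _ ≤ (2 * Real.Gamma (α/2+1)) * (Real.Gamma (α/2+1) * (2:ℝ)^(1+α)) * √π := by
          apply mul_le_mul_of_nonneg_right
            (mul_le_mul_of_nonneg_right h1 (by positivity)) hsqrtπ.le
      _ = 2^(1+α) * (2 * √π * Real.Gamma (α/2+1)^2) := by ring
end

section
/- For every real α with 1 < α < 2, the sequence of fractional centred difference coefficients is strictly increasing along positive indices beyond the first: for every integer k ≥ 2 one has g_{k−1}^{(α)} < g_k^{(α)} < 0; equivalently, the absolute values |g_k^{(α)}| are strictly decreasing in k for k ≥ 1. By the symmetry g_{−k}^{(α)} = g_k^{(α)}, the coefficients are correspondingly strictly decreasing along negative indices k ≤ −2 as k decreases. -/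
open Real

lemma halpha_not_int (α : ℝ) (hα1 : 1 < α) (hα2 : α < 2) (n : ℤ) : (n : ℝ) ≠ α / 2 := by
  intro h
  have h1 : (0:ℤ) < n := by exact_mod_cast (by linarith : (0:ℝ) < n)
  have h2 : n < 1 := by exact_mod_cast (by linarith : (n:ℝ) < 1)
  omega

lemma fracCoeff_rec (α : ℝ) (hα1 : 1 < α) (hα2 : α < 2) (k : ℤ) (hk : 1 ≤ k) :
    fracCoeff α k = fracCoeff α (k - 1) * (((k : ℝ) - 1 - α / 2) / ((k : ℝ) + α / 2)) := by
  have hkpos : (0:ℝ) < (k:ℝ) + α/2 := by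
    have : (1:ℝ) ≤ (k:ℝ) := by exact_mod_cast hk
    linarith
  have hx0 : α / 2 - (k:ℝ) + 1 ≠ 0 := by
    intro h
    exact halpha_not_int α hα1 hα2 (k - 1) (by push_cast; linarith)
  have hG1 : Real.Gamma (α/2 - ((k:ℝ) - 1) + 1) = (α/2 - (k:ℝ) + 1) * Real.Gamma (α/2 - (k:ℝ) + 1) := by
    rw [show α/2 - ((k:ℝ) - 1) + 1 = (α/2 - (k:ℝ) + 1) + 1 by ring]
    exact Real.Gamma_add_one hx0
  have hG2 : Real.Gamma (α/2 + (k:ℝ) + 1) = (α/2 + (k:ℝ)) * Real.Gamma (α/2 + (k:ℝ)) := by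
    rw [show α/2 + (k:ℝ) + 1 = (α/2 + (k:ℝ)) + 1 by ring]
    exact Real.Gamma_add_one (by linarith)
  have hGne1 : Real.Gamma (α/2 - (k:ℝ) + 1) ≠ 0 := by
    apply Real.Gamma_ne_zero
    intro m h
    exact halpha_not_int α hα1 hα2 (k - 1 - (m:ℤ)) (by push_cast; linarith)
  have hGne2 : Real.Gamma (α/2 + (k:ℝ)) ≠ 0 :=
    (Real.Gamma_pos_of_pos (by linarith)).ne'
  have hpow : (-1:ℝ) ^ k = -(-1:ℝ) ^ (k - 1) := by
    rw [show k = (k - 1) + 1 by ring, zpow_add_one₀ (by norm_num : (-1:ℝ) ≠ 0)]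
    ring
  unfold fracCoeff
  push_cast
  rw [hG1, hG2, hpow, show α/2 + ((k:ℝ) - 1) + 1 = α/2 + (k:ℝ) by ring,
    div_mul_div_comm, div_eq_div_iff
      (mul_ne_zero hGne1 (mul_ne_zero (by linarith : α/2 + (k:ℝ) ≠ 0) hGne2))
      (mul_ne_zero (mul_ne_zero (mul_ne_zero hx0 hGne1) hGne2) hkpos.ne')]
  ring_nf

lemma fracCoeff_neg_one (α : ℝ) (hα1 : 1 < α) (hα2 : α < 2) : fracCoeff α 1 < 0 := by
  unfold fracCoeff
  push_cast
  have h1 : Real.Gamma (α + 1) > 0 := Real.Gamma_pos_of_pos (by linarith)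
  have h2 : Real.Gamma (α/2 - 1 + 1) > 0 := Real.Gamma_pos_of_pos (by linarith)
  have h3 : Real.Gamma (α/2 + 1 + 1) > 0 := Real.Gamma_pos_of_pos (by linarith)
  rw [zpow_one]
  apply div_neg_of_neg_of_pos
  · nlinarith
  · positivity

lemma fracCoeff_neg_s6 (α : ℝ) (hα1 : 1 < α) (hα2 : α < 2) (k : ℤ) (hk : 1 ≤ k) :
    fracCoeff α k < 0 := by
  refine Int.le_induction (motive := fun n _ => fracCoeff α n < 0) (fracCoeff_neg_one α hα1 hα2) (fun n hn ih => ?_) k hk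
  have hrec := fracCoeff_rec α hα1 hα2 (n + 1) (by omega)
  rw [show n + 1 - 1 = n by ring] at hrec
  rw [hrec]
  have hn1 : (1:ℝ) ≤ (n:ℝ) := by exact_mod_cast hn
  refine mul_neg_of_neg_of_pos ih ?_
  push_cast
  apply div_pos <;> nlinarith

lemma fracCoeff_part1 (α : ℝ) (hα1 : 1 < α) (hα2 : α < 2) (k : ℤ) (hk : 2 ≤ k) :
    fracCoeff α (k - 1) < fracCoeff α k ∧ fracCoeff α k < 0 := by
  have hrec := fracCoeff_rec α hα1 hα2 k (by omega)
  have hprev := fracCoeff_neg_s6 α hα1 hα2 (k - 1) (by omega)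
  have hk2 : (2:ℝ) ≤ (k:ℝ) := by exact_mod_cast hk
  have hc1 : 0 < ((k:ℝ) - 1 - α/2) / ((k:ℝ) + α/2) := by
    apply div_pos <;> nlinarith
  have hc2 : ((k:ℝ) - 1 - α/2) / ((k:ℝ) + α/2) < 1 := by
    rw [div_lt_one (by nlinarith)]
    nlinarith
  constructor
  · rw [hrec]
    nlinarith
  · rw [hrec]
    exact mul_neg_of_neg_of_pos hprev hc1

lemma fracCoeff_symm (α : ℝ) (k : ℤ) : fracCoeff α (-k) = fracCoeff α k := by
  unfold fracCoeff
  rw [zpow_neg, show ((-1:ℝ)^k)⁻¹ = (-1:ℝ)^k by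
    rcases Int.even_or_odd k with h | h
    · rw [h.neg_one_zpow]; norm_num
    · rw [Odd.neg_one_zpow h]; norm_num]
  push_cast
  ring_nf

theorem fracCoeff_strict_mono_in_index (α : ℝ) (hα1 : 1 < α) (hα2 : α < 2) :
    (∀ k : ℤ, 2 ≤ k → fracCoeff α (k - 1) < fracCoeff α k ∧ fracCoeff α k < 0) ∧
    (∀ k : ℤ, 1 ≤ k → |fracCoeff α (k + 1)| < |fracCoeff α k|) ∧
    (∀ k : ℤ, fracCoeff α (-k) = fracCoeff α k) ∧
    (∀ k : ℤ, k ≤ -2 → fracCoeff α (k + 1) < fracCoeff α k) := by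
  refine ⟨fun k hk => fracCoeff_part1 α hα1 hα2 k hk, ?_, fun k => fracCoeff_symm α k, ?_⟩
  · intro k hk
    obtain ⟨h1, h2⟩ := fracCoeff_part1 α hα1 hα2 (k + 1) (by omega)
    rw [show k + 1 - 1 = k by ring] at h1
    rw [abs_of_neg h2, abs_of_neg (lt_trans h1 h2)]
    linarith
  · intro k hk
    have h1 := (fracCoeff_part1 α hα1 hα2 (-k) (by omega)).1
    rw [← fracCoeff_symm α (-k - 1), ← fracCoeff_symm α (-k)] at h1
    rw [show -(-k - 1) = k + 1 by ring, neg_neg] at h1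
    exact h1
end

section
/- For every real α with 1 < α < 2, the family (g_k^{(α)})_{k∈ℤ} is absolutely summable, its total sum over all integers k equals zero: Σ_{k∈ℤ} g_k^{(α)} = 0, and consequently Σ_{k∈ℤ, k≠0} |g_k^{(α)}| = g_0^{(α)}. -/
set_option maxHeartbeats 800000

open Real

namespace FracCoeffAux

/-- `fA α n = Γ(n+1-α/2) / Γ(n+1+α/2)`. -/
noncomputable def fA (α : ℝ) (n : ℕ) : ℝ :=
  Real.Gamma ((n : ℝ) + 1 - α / 2) / Real.Gamma ((n : ℝ) + 1 + α / 2)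

variable {α : ℝ}

lemma arg1_pos (h2 : α < 2) (n : ℕ) : 0 < (n : ℝ) + 1 - α / 2 := by
  have : (0:ℝ) ≤ n := n.cast_nonneg; linarith

lemma arg2_pos (h1 : 1 < α) (n : ℕ) : 0 < (n : ℝ) + 1 + α / 2 := by
  have : (0:ℝ) ≤ n := n.cast_nonneg; linarith

lemma fA_pos (h1 : 1 < α) (h2 : α < 2) (n : ℕ) : 0 < fA α n :=
  div_pos (Real.Gamma_pos_of_pos (arg1_pos h2 n)) (Real.Gamma_pos_of_pos (arg2_pos h1 n))

lemma fA_succ (h1 : 1 < α) (h2 : α < 2) (n : ℕ) :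
    fA α (n + 1) = fA α n * (((n : ℝ) + 1 - α / 2) / ((n : ℝ) + 1 + α / 2)) := by
  have e1 : ((n+1 : ℕ) : ℝ) + 1 - α / 2 = ((n : ℝ) + 1 - α / 2) + 1 := by push_cast; ring
  have e2 : ((n+1 : ℕ) : ℝ) + 1 + α / 2 = ((n : ℝ) + 1 + α / 2) + 1 := by push_cast; ring
  rw [fA, e1, e2, Real.Gamma_add_one (ne_of_gt (arg1_pos h2 n)),
    Real.Gamma_add_one (ne_of_gt (arg2_pos h1 n)), fA]
  field_simp

lemma fA_antitone (h1 : 1 < α) (h2 : α < 2) (n : ℕ) : fA α (n + 1) ≤ fA α n := by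
  rw [fA_succ h1 h2 n]
  have h0 : 0 < (n : ℝ) + 1 + α / 2 := arg2_pos h1 n
  have : ((n : ℝ) + 1 - α / 2) / ((n : ℝ) + 1 + α / 2) ≤ 1 := by
    rw [div_le_one h0]; linarith
  nlinarith [fA_pos h1 h2 n]

lemma fA_bound (h1 : 1 < α) (h2 : α < 2) (n : ℕ) :
    fA α n ≤ fA α 0 / (2 * (n : ℝ) + 1) := by
  induction n with
  | zero => simp
  | succ n ih =>
    rw [fA_succ h1 h2 n]
    have h0 : 0 < (n : ℝ) + 1 + α / 2 := arg2_pos h1 n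
    have hfrac : ((n : ℝ) + 1 - α / 2) / ((n : ℝ) + 1 + α / 2) ≤
        (2 * (n : ℝ) + 1) / (2 * (n : ℝ) + 3) := by
      rw [div_le_div_iff₀ h0 (by positivity)]
      nlinarith [n.cast_nonneg (α := ℝ)]
    have hfn : 0 < fA α n := fA_pos h1 h2 n
    calc fA α n * (((n : ℝ) + 1 - α / 2) / ((n : ℝ) + 1 + α / 2))
        ≤ (fA α 0 / (2 * (n : ℝ) + 1)) * ((2 * (n : ℝ) + 1) / (2 * (n : ℝ) + 3)) := by
          exact mul_le_mul ih hfrac (div_nonneg (arg1_pos h2 n).le (arg2_pos h1 n).le)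
            (div_nonneg (fA_pos h1 h2 0).le (by positivity))
      _ = fA α 0 / (2 * (n : ℝ) + 3) := by
          field_simp
      _ = fA α 0 / (2 * ((n+1 : ℕ) : ℝ) + 1) := by push_cast; ring_nf

lemma fA_tendsto (h1 : 1 < α) (h2 : α < 2) :
    Filter.Tendsto (fA α) Filter.atTop (nhds 0) := by
  have hub : Filter.Tendsto (fun n : ℕ => fA α 0 / (2 * (n : ℝ) + 1)) Filter.atTop (nhds 0) := by
    apply Filter.Tendsto.div_atTop tendsto_const_nhds
    apply Filter.tendsto_atTop_add_const_right
    exact (tendsto_natCast_atTop_atTop (R := ℝ)).const_mul_atTop (by norm_num)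
  refine squeeze_zero (fun n => (fA_pos h1 h2 n).le) (fun n => fA_bound h1 h2 n) hub

lemma hasSum_tel (h1 : 1 < α) (h2 : α < 2) :
    HasSum (fun n : ℕ => fA α n - fA α (n + 1)) (fA α 0) := by
  rw [hasSum_iff_tendsto_nat_of_nonneg (fun n => sub_nonneg.2 (fA_antitone h1 h2 n))]
  have : ∀ n : ℕ, ∑ i ∈ Finset.range n, (fA α i - fA α (i + 1)) = fA α 0 - fA α n :=
    fun n => Finset.sum_range_sub' (fA α) n
  simp only [this]
  simpa using tendsto_const_nhds.sub (fA_tendsto h1 h2)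

lemma sin_shift (n : ℕ) : Real.sin (π * (α / 2 - n)) = (-1 : ℝ) ^ n * Real.sin (π * (α / 2)) := by
  induction n with
  | zero => simp
  | succ n ih =>
    have : π * (α / 2 - (n + 1 : ℕ)) = π * (α / 2 - n) - π := by push_cast; ring
    rw [this, Real.sin_sub_pi, ih, pow_succ]
    ring

lemma refl_prod (n : ℕ) :
    Real.Gamma (α / 2 - n) * Real.Gamma ((n : ℝ) + 1 - α / 2)
      = (-1 : ℝ) ^ n * π / Real.sin (π * (α / 2)) := by
  have h := Real.Gamma_mul_Gamma_one_sub (α / 2 - n)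
  have e : (1 : ℝ) - (α / 2 - n) = (n : ℝ) + 1 - α / 2 := by ring
  rw [e, sin_shift] at h
  rw [h]
  rcases Nat.even_or_odd n with he | ho
  · rw [he.neg_one_pow]; ring_nf
  · rw [ho.neg_one_pow]
    rw [neg_one_mul, div_neg, neg_one_mul, neg_div]

lemma sin_pos (h1 : 1 < α) (h2 : α < 2) : 0 < Real.sin (π * (α / 2)) := by
  apply Real.sin_pos_of_pos_of_lt_pi
  · positivity
  · nlinarith [Real.pi_pos]

lemma gamma_alpha_pos (h1 : 1 < α) : 0 < Real.Gamma (α + 1) :=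
  Real.Gamma_pos_of_pos (by linarith)

/-- The key formula: `g_{n+1} = -K (fA n - fA (n+1))` with
`K = Γ(α+1) sin(π α/2) / (π α)`. -/
lemma g_formula (h1 : 1 < α) (h2 : α < 2) (n : ℕ) :
    fracCoeff α ((n : ℤ) + 1)
      = -(Real.Gamma (α + 1) * Real.sin (π * (α / 2)) / (π * α)) * (fA α n - fA α (n + 1)) := by
  have hsin := sin_pos h1 h2
  have hπ := Real.pi_pos
  have hα : (0:ℝ) < α := by linarith
  -- step 1 : fA α n - fA α (n+1) = α * Γ(n+1-a)/Γ(n+2+a)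
  have hG1 : Real.Gamma ((n : ℝ) + 1 + α / 2 + 1)
      = ((n : ℝ) + 1 + α / 2) * Real.Gamma ((n : ℝ) + 1 + α / 2) :=
    Real.Gamma_add_one (ne_of_gt (arg2_pos h1 n))
  have hB : fA α n - fA α (n + 1)
      = α * (Real.Gamma ((n : ℝ) + 1 - α / 2) / Real.Gamma ((n : ℝ) + 1 + α / 2 + 1)) := by
    rw [fA_succ h1 h2 n, fA, hG1]
    have hp1 := Real.Gamma_pos_of_pos (arg1_pos h2 n)
    have hp2 := Real.Gamma_pos_of_pos (arg2_pos h1 n)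
    have h0 := arg2_pos h1 n
    field_simp
    ring
  -- step 2 : rewrite fracCoeff
  have hcast : fracCoeff α ((n : ℤ) + 1)
      = ((-1 : ℝ) ^ (n+1) * Real.Gamma (α + 1)) /
        (Real.Gamma (α / 2 - n) * Real.Gamma ((n : ℝ) + 1 + α / 2 + 1)) := by
    rw [fracCoeff]
    have : ((-1 : ℝ)) ^ ((n : ℤ) + 1) = (-1 : ℝ) ^ (n + 1) := by
      rw [show ((n : ℤ) + 1) = ((n + 1 : ℕ) : ℤ) by push_cast; ring, zpow_natCast]
    rw [this]
    norm_num
    ring_nf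
  rw [hcast, hB]
  have hrefl := refl_prod (α := α) n
  have hp1 := Real.Gamma_pos_of_pos (arg1_pos h2 n)
  have hp2 : 0 < Real.Gamma ((n : ℝ) + 1 + α / 2 + 1) := by
    rw [hG1]; exact mul_pos (arg2_pos h1 n) (Real.Gamma_pos_of_pos (arg2_pos h1 n))
  have hpow : ((-1:ℝ)^n) ≠ 0 := by
    rcases Nat.even_or_odd n with he | ho
    · rw [he.neg_one_pow]; norm_num
    · rw [ho.neg_one_pow]; norm_num
  have hGa : Real.Gamma (α / 2 - n) ≠ 0 := by
    intro h0
    rw [h0, zero_mul] at hrefl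
    exact (div_ne_zero (mul_ne_zero hpow hπ.ne') hsin.ne') hrefl.symm
  have key : Real.Gamma (α / 2 - n)
      = ((-1:ℝ)^n * π / Real.sin (π * (α / 2))) / Real.Gamma ((n : ℝ) + 1 - α / 2) := by
    rw [eq_div_iff hp1.ne']
    exact hrefl
  rcases Nat.even_or_odd n with he | ho
  · rw [key, pow_succ, he.neg_one_pow]
    field_simp
  · rw [key, pow_succ, ho.neg_one_pow]
    field_simp

lemma g_symm (k : ℤ) : fracCoeff α (-k) = fracCoeff α k := by
  unfold fracCoeff
  have hpow : ((-1:ℝ) ^ (-k)) = (-1:ℝ) ^ k := by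
    rw [zpow_neg, ← inv_zpow]; norm_num
  rw [hpow]
  push_cast
  ring_nf

lemma g_zero : fracCoeff α 0 = Real.Gamma (α + 1) / (Real.Gamma (α / 2 + 1) * Real.Gamma (α / 2 + 1)) := by
  unfold fracCoeff
  norm_num

lemma g_zero_pos (h1 : 1 < α) (h2 : α < 2) : 0 < fracCoeff α 0 := by
  rw [g_zero]
  have h := Real.Gamma_pos_of_pos (show (0:ℝ) < α / 2 + 1 by linarith)
  exact div_pos (gamma_alpha_pos h1) (mul_pos h h)

lemma K_pos (h1 : 1 < α) (h2 : α < 2) :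
    0 < Real.Gamma (α + 1) * Real.sin (π * (α / 2)) / (π * α) := by
  have := sin_pos h1 h2
  have := gamma_alpha_pos h1
  have := Real.pi_pos
  have : (0:ℝ) < α := by linarith
  positivity

lemma K_mul_fA_zero (h1 : 1 < α) (h2 : α < 2) :
    Real.Gamma (α + 1) * Real.sin (π * (α / 2)) / (π * α) * fA α 0 = fracCoeff α 0 / 2 := by
  have hrefl := Real.Gamma_mul_Gamma_one_sub (α / 2)
  have ha : (0:ℝ) < α / 2 := by linarith
  have hadd : Real.Gamma (α / 2 + 1) = (α / 2) * Real.Gamma (α / 2) :=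
    Real.Gamma_add_one ha.ne'
  have hsin := sin_pos h1 h2
  have hπ := Real.pi_pos
  have hGa := Real.Gamma_pos_of_pos ha
  have hG1a := Real.Gamma_pos_of_pos (show (0:ℝ) < 1 - α / 2 by linarith)
  have hf0 : fA α 0 = Real.Gamma (1 - α / 2) / Real.Gamma (1 + α / 2) := by
    unfold fA; norm_num
  have h2' : Real.Gamma (α / 2) * Real.Gamma (1 - α / 2) * Real.sin (π * (α / 2)) = π := by
    rw [hrefl, div_mul_cancel₀ _ hsin.ne']
  rw [hf0, g_zero, hadd, show (1:ℝ) + α / 2 = α / 2 + 1 by ring, hadd]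
  set s := Real.sin (π * (α / 2)) with hs
  set G := Real.Gamma (α / 2) with hG
  set G1 := Real.Gamma (1 - α / 2) with hG1
  set GA := Real.Gamma (α + 1) with hGA
  have hα : (0:ℝ) < α := by linarith
  field_simp
  linear_combination GA * h2'

lemma hasSum_pos_side (h1 : 1 < α) (h2 : α < 2) :
    HasSum (fun n : ℕ => fracCoeff α ((n : ℤ) + 1)) (-(fracCoeff α 0) / 2) := by
  have h := (hasSum_tel h1 h2).mul_left
    (-(Real.Gamma (α + 1) * Real.sin (π * (α / 2)) / (π * α)))
  have he : ∀ n : ℕ, -(Real.Gamma (α + 1) * Real.sin (π * (α / 2)) / (π * α)) *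
      (fA α n - fA α (n + 1)) = fracCoeff α ((n : ℤ) + 1) := by
    intro n; rw [g_formula h1 h2 n]
  rw [show -(Real.Gamma (α + 1) * Real.sin (π * (α / 2)) / (π * α)) * fA α 0
      = -(fracCoeff α 0) / 2 by
    rw [neg_mul, K_mul_fA_zero h1 h2]; ring] at h
  exact h.congr_fun fun n => g_formula h1 h2 n

lemma g_nonpos (h1 : 1 < α) (h2 : α < 2) (n : ℕ) : fracCoeff α ((n : ℤ) + 1) ≤ 0 := by
  rw [g_formula h1 h2 n]
  have h := K_pos h1 h2
  have h' := fA_antitone h1 h2 n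
  nlinarith

lemma g_nonpos' (h1 : 1 < α) (h2 : α < 2) (k : ℤ) (hk : k ≠ 0) : fracCoeff α k ≤ 0 := by
  rcases lt_or_gt_of_ne hk with hlt | hgt
  · rw [← neg_neg k, g_symm]
    obtain ⟨n, hn⟩ : ∃ n : ℕ, -k = (n : ℤ) + 1 := ⟨(-k - 1).toNat, by omega⟩
    rw [hn]; exact g_nonpos h1 h2 n
  · obtain ⟨n, hn⟩ : ∃ n : ℕ, k = (n : ℤ) + 1 := ⟨(k - 1).toNat, by omega⟩
    rw [hn]; exact g_nonpos h1 h2 n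

end FracCoeffAux

open FracCoeffAux in
theorem fracCoeff_summable_sum_zero (α : ℝ) (hα1 : 1 < α) (hα2 : α < 2) :
    Summable (fun k : ℤ => |fracCoeff α k|) ∧
    ∑' k : ℤ, fracCoeff α k = 0 ∧
    ∑' k : {k : ℤ // k ≠ 0}, |fracCoeff α k| = fracCoeff α 0 := by
  set g0 := fracCoeff α 0 with hg0
  have hg0pos : 0 < g0 := g_zero_pos hα1 hα2
  -- positive side
  have hS1 : HasSum (fun n : ℕ => fracCoeff α ((n : ℤ) + 1)) (-g0 / 2) :=
    hasSum_pos_side hα1 hα2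
  -- sums over ℕ including 0
  have hS2 : HasSum (fun n : ℕ => fracCoeff α (n : ℤ)) (g0 / 2) := by
    have h := (hasSum_nat_add_iff (f := fun n : ℕ => fracCoeff α (n : ℤ)) 1
      (g := -g0 / 2)).mp (by
        exact hS1.congr_fun fun n => congrArg (fracCoeff α) (by push_cast; ring))
    have h2 : (-g0 / 2 + ∑ i ∈ Finset.range 1, fracCoeff α (i : ℤ)) = g0 / 2 := by
      rw [Finset.sum_range_one]
      push_cast
      rw [← hg0]
      ring
    rwa [h2] at h
  -- negative side
  have hS3 : HasSum (fun n : ℕ => fracCoeff α (-((n : ℤ) + 1))) (-g0 / 2) := by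
    exact hS1.congr_fun fun n => g_symm _
  have htotal : HasSum (fracCoeff α) 0 := by
    have h := hS2.of_nat_of_neg_add_one hS3
    rwa [show g0 / 2 + -g0 / 2 = (0:ℝ) by ring] at h
  -- absolute values
  have hA1 : HasSum (fun n : ℕ => |fracCoeff α ((n : ℤ) + 1)|) (g0 / 2) := by
    have h := hS1.neg
    rw [show -(-g0 / 2) = g0 / 2 by ring] at h
    exact h.congr_fun fun n => abs_of_nonpos (g_nonpos hα1 hα2 n)
  have hA2 : HasSum (fun n : ℕ => |fracCoeff α (n : ℤ)|) (g0 / 2 + g0) := by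
    have h := (hasSum_nat_add_iff (f := fun n : ℕ => |fracCoeff α (n : ℤ)|) 1
      (g := g0 / 2)).mp
      (hA1.congr_fun fun n => congrArg abs (congrArg (fracCoeff α) (by push_cast; ring)))
    have e : (∑ i ∈ Finset.range 1, |fracCoeff α (i : ℤ)|) = g0 := by
      rw [Finset.sum_range_one, show ((0:ℕ):ℤ) = 0 from rfl, ← hg0, abs_of_pos hg0pos]
    rwa [e] at h
  have hA3 : HasSum (fun n : ℕ => |fracCoeff α (-((n : ℤ) + 1))|) (g0 / 2) :=
    hA1.congr_fun fun n => congrArg abs (g_symm _)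
  have hAbs : HasSum (fun k : ℤ => |fracCoeff α k|) (2 * g0) := by
    have h := HasSum.of_nat_of_neg_add_one (f := fun k : ℤ => |fracCoeff α k|) hA2 hA3
    rwa [show g0 / 2 + g0 + g0 / 2 = 2 * g0 by ring] at h
  refine ⟨hAbs.summable, htotal.tsum_eq, ?_⟩
  have hsub : HasSum (fun x : {x : ℤ // x ∉ ({0} : Finset ℤ)} => |fracCoeff α x|) g0 := by
    refine (Finset.hasSum_compl_iff (f := fun k : ℤ => |fracCoeff α k|)
      ({0} : Finset ℤ)).mpr ?_
    rw [Finset.sum_singleton, ← hg0, abs_of_pos hg0pos, show g0 + g0 = 2 * g0 by ring]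
    exact hAbs
  have hfinal : HasSum (fun k : {k : ℤ // k ≠ 0} => |fracCoeff α (k : ℤ)|) g0 := by
    have h := (Equiv.hasSum_iff (f := fun x : {x : ℤ // x ∉ ({0} : Finset ℤ)} => |fracCoeff α x|)
      (Equiv.subtypeEquivRight (p := fun k : ℤ => k ≠ 0) (q := fun x : ℤ => x ∉ ({0} : Finset ℤ))
        (fun x => by simp))).mpr hsub
    exact h
  exact hfinal.tsum_eq
end

section
/- For every real α with 1 < α < 2 and every natural number m ≥ 0, the symmetric partial sum of the fractional centred difference coefficients is strictly positive: Σ_{k=−m}^{m} g_k^{(α)} > 0. -/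
open Real

private lemma fc_prod_pos (α : ℝ) (hα2 : α < 2) (m : ℕ) :
    0 < ∏ j ∈ Finset.range m, ((j : ℝ) + 1 - α / 2) := by
  apply Finset.prod_pos
  intro j _
  have hj : (0 : ℝ) ≤ j := Nat.cast_nonneg j
  linarith

private lemma fc_gamma_neg (α : ℝ) (_hα1 : 1 < α) (hα2 : α < 2) (m : ℕ) :
    Real.Gamma (α / 2 - m) * ∏ j ∈ Finset.range m, ((j : ℝ) + 1 - α / 2)
      = (-1 : ℝ) ^ m * Real.Gamma (α / 2) := by
  induction m with
  | zero => simp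
  | succ n ih =>
    have h1 : (α / 2 - ((n : ℝ) + 1)) ≠ 0 := by
      have hn : (0 : ℝ) ≤ n := Nat.cast_nonneg n
      intro h; nlinarith
    have key : Real.Gamma (α / 2 - n) = (α / 2 - ((n : ℝ) + 1)) * Real.Gamma (α / 2 - ((n : ℝ) + 1)) := by
      have := Real.Gamma_add_one h1
      rw [show α / 2 - ((n : ℝ) + 1) + 1 = α / 2 - n by ring] at this
      linarith [this]
    rw [Finset.prod_range_succ]
    push_cast
    rw [show Real.Gamma (α / 2 - ((n : ℝ) + 1)) *
        ((∏ j ∈ Finset.range n, ((j : ℝ) + 1 - α / 2)) * ((n : ℝ) + 1 - α / 2))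
        = -((α / 2 - ((n : ℝ) + 1)) * Real.Gamma (α / 2 - ((n : ℝ) + 1)) *
            ∏ j ∈ Finset.range n, ((j : ℝ) + 1 - α / 2)) by ring, ← key, ih]
    ring

private lemma fc_sum_eq (α : ℝ) (hα1 : 1 < α) (hα2 : α < 2) (m : ℕ) :
    ∑ k ∈ Finset.Icc (-(m : ℤ)) (m : ℤ), fracCoeff α k
      = 2 * Real.Gamma α * (∏ j ∈ Finset.range m, ((j : ℝ) + 1 - α / 2))
        / (Real.Gamma (α / 2 + m + 1) * Real.Gamma (α / 2)) := by
  have hα0 : (0 : ℝ) < α := by linarith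
  have hc : (0 : ℝ) < α / 2 := by linarith
  have hGc : 0 < Real.Gamma (α / 2) := Real.Gamma_pos_of_pos hc
  have hGa : 0 < Real.Gamma α := Real.Gamma_pos_of_pos hα0
  have hA1 : Real.Gamma (α + 1) = α * Real.Gamma α := Real.Gamma_add_one hα0.ne'
  induction m with
  | zero =>
    simp only [Nat.cast_zero, neg_zero, Finset.Icc_self, Finset.sum_singleton,
      Finset.range_zero, Finset.prod_empty]
    simp only [fracCoeff, Int.cast_zero, zpow_zero, one_mul, sub_zero, add_zero]
    have hG1 : Real.Gamma (α / 2 + 1) = (α / 2) * Real.Gamma (α / 2) :=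
      Real.Gamma_add_one hc.ne'
    rw [hA1, hG1]
    field_simp
  | succ n ih =>
    have hsplit : Finset.Icc (-((n : ℤ) + 1)) ((n : ℤ) + 1)
        = insert (-((n : ℤ) + 1)) (insert ((n : ℤ) + 1) (Finset.Icc (-(n : ℤ)) (n : ℤ))) := by
      ext x
      simp only [Finset.mem_Icc, Finset.mem_insert]
      omega
    have hmem1 : ((n : ℤ) + 1) ∉ Finset.Icc (-(n : ℤ)) (n : ℤ) := by
      simp only [Finset.mem_Icc]; omega
    have hmem2 : (-((n : ℤ) + 1)) ∉ insert ((n : ℤ) + 1) (Finset.Icc (-(n : ℤ)) (n : ℤ)) := by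
      simp only [Finset.mem_insert, Finset.mem_Icc]; omega
    have hGn : 0 < Real.Gamma (α / 2 + n + 1) :=
      Real.Gamma_pos_of_pos (by positivity)
    have hGn2 : Real.Gamma (α / 2 + (n : ℝ) + 2) = (α / 2 + n + 1) * Real.Gamma (α / 2 + n + 1) := by
      have := Real.Gamma_add_one (s := α / 2 + n + 1) (by positivity)
      rw [show α / 2 + (n : ℝ) + 1 + 1 = α / 2 + n + 2 by ring] at this
      exact this
    have hP : 0 < ∏ j ∈ Finset.range n, ((j : ℝ) + 1 - α / 2) := fc_prod_pos α hα2 n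
    have hGneg : Real.Gamma (α / 2 - n)
        = (-1 : ℝ) ^ n * Real.Gamma (α / 2) / ∏ j ∈ Finset.range n, ((j : ℝ) + 1 - α / 2) := by
      rw [← fc_gamma_neg α hα1 hα2 n, mul_div_assoc, div_self hP.ne', mul_one]
    have hz1 : ((-1 : ℝ)) ^ ((n : ℤ) + 1) = (-1 : ℝ) ^ (n + 1) := by
      rw [show ((n : ℤ) + 1) = ((n + 1 : ℕ) : ℤ) by push_cast; ring, zpow_natCast]
    have hz2 : ((-1 : ℝ)) ^ (-((n : ℤ) + 1)) = (-1 : ℝ) ^ (n + 1) := by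
      rw [zpow_neg, hz1, ← inv_pow, inv_neg, inv_one]
    have hgp : fracCoeff α ((n : ℤ) + 1)
        = (-1 : ℝ) ^ (n + 1) * Real.Gamma (α + 1)
          / (Real.Gamma (α / 2 - n) * Real.Gamma (α / 2 + n + 2)) := by
      simp only [fracCoeff, hz1]
      push_cast
      ring_nf
    have he : ((-1 : ℝ)) ^ n ≠ 0 := pow_ne_zero _ (by norm_num)
    have hgm : fracCoeff α (-((n : ℤ) + 1)) = fracCoeff α ((n : ℤ) + 1) := by
      simp only [fracCoeff, hz1, hz2]
      push_cast
      ring_nf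
    have hgval : fracCoeff α ((n : ℤ) + 1)
        = -(α * Real.Gamma α * ∏ j ∈ Finset.range n, ((j : ℝ) + 1 - α / 2))
          / (Real.Gamma (α / 2) * ((α / 2 + n + 1) * Real.Gamma (α / 2 + n + 1))) := by
      rw [hgp, hGneg, hA1, hGn2]
      rw [show ((-1 : ℝ) ^ n * Real.Gamma (α / 2) / ∏ j ∈ Finset.range n, ((j : ℝ) + 1 - α / 2)) *
            ((α / 2 + n + 1) * Real.Gamma (α / 2 + n + 1))
          = (-1 : ℝ) ^ n * ((Real.Gamma (α / 2) * ((α / 2 + n + 1) * Real.Gamma (α / 2 + n + 1))) /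
              ∏ j ∈ Finset.range n, ((j : ℝ) + 1 - α / 2)) from by ring]
      rw [show ((-1 : ℝ) ^ (n + 1) * (α * Real.Gamma α))
          = (-1 : ℝ) ^ n * (-(α * Real.Gamma α)) from by ring]
      rw [mul_div_mul_left _ _ he, div_div_eq_mul_div]
      ring
    rw [show (-(((n : ℕ) + 1 : ℕ) : ℤ)) = -((n : ℤ) + 1) by push_cast; ring,
      show ((((n : ℕ) + 1 : ℕ)) : ℤ) = ((n : ℤ) + 1) by push_cast; ring] at *
    rw [hsplit, Finset.sum_insert hmem2, Finset.sum_insert hmem1, ih, hgm, hgval]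
    rw [Finset.prod_range_succ]
    push_cast
    rw [show α / 2 + ((n : ℝ) + 1) + 1 = α / 2 + n + 2 by ring, hGn2]
    have hne : (α / 2 + (n : ℝ) + 1) ≠ 0 := by positivity
    field_simp
    ring

theorem fracCoeff_symmetric_partial_sum_pos (α : ℝ) (hα1 : 1 < α) (hα2 : α < 2)
    (m : ℕ) :
    0 < ∑ k ∈ Finset.Icc (-(m : ℤ)) (m : ℤ), fracCoeff α k := by
  rw [fc_sum_eq α hα1 hα2 m]
  have hGa : 0 < Real.Gamma α := Real.Gamma_pos_of_pos (by linarith)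
  have hGc : 0 < Real.Gamma (α / 2) := Real.Gamma_pos_of_pos (by linarith)
  have hGm : 0 < Real.Gamma (α / 2 + m + 1) := Real.Gamma_pos_of_pos (by positivity)
  have hP := fc_prod_pos α hα2 m
  positivity
end

section
/- For every real α with 1 < α < 2, the central fractional centred difference coefficient satisfies the two-sided bound 2^{1+α}/((1+α)·π) ≤ Γ(α+1)/Γ(α/2+1)² ≤ 2^{1+α}/π. -/
open Real

/-- Convex pair inequality: if `f` is convex on `Ioi 0`, `0 < a ≤ x ≤ b` and
`x + y = a + b`, then `f x + f y ≤ f a + f b`. -/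
lemma convex_pair {f : ℝ → ℝ} (hf : ConvexOn ℝ (Set.Ioi 0) f) {a x y b : ℝ}
    (ha : 0 < a) (hax : a ≤ x) (hxb : x ≤ b) (hsum : x + y = a + b) :
    f x + f y ≤ f a + f b := by
  rcases eq_or_lt_of_le (hax.trans hxb) with h | hab
  · have hx : x = a := le_antisymm (h ▸ hxb) hax
    have hy : y = a := by linarith
    rw [hx, hy, ← h]
  · have hb : (0:ℝ) < b := ha.trans hab
    set μ := (b - x) / (b - a) with hμ
    set ν := (x - a) / (b - a) with hν
    have hba : (0:ℝ) < b - a := by linarith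
    have hμ0 : 0 ≤ μ := div_nonneg (by linarith) hba.le
    have hν0 : 0 ≤ ν := div_nonneg (by linarith) hba.le
    have hμν : μ + ν = 1 := by rw [hμ, hν]; field_simp; ring
    have hxe : μ * a + ν * b = x := by rw [hμ, hν]; field_simp; ring
    have hye : ν * a + μ * b = y := by
      have : ν * a + μ * b = a + b - x := by rw [hμ, hν]; field_simp; ring
      linarith
    have h1 := hf.2 (Set.mem_Ioi.2 ha) (Set.mem_Ioi.2 hb) hμ0 hν0 hμν
    have h2 := hf.2 (Set.mem_Ioi.2 ha) (Set.mem_Ioi.2 hb) hν0 hμ0 (by linarith)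
    simp only [smul_eq_mul] at h1 h2
    rw [hxe] at h1; rw [hye] at h2
    have : (μ + ν) * f a + (μ + ν) * f b = f a + f b := by rw [hμν]; ring
    nlinarith [this]

/-- Gamma product inequality from log-convexity. -/
lemma Gamma_pair_le {a x y b : ℝ} (ha : 0 < a) (hax : a ≤ x) (hxb : x ≤ b)
    (hsum : x + y = a + b) :
    Real.Gamma x * Real.Gamma y ≤ Real.Gamma a * Real.Gamma b := by
  have hx : 0 < x := lt_of_lt_of_le ha hax
  have hb : 0 < b := lt_of_lt_of_le hx hxb
  have hy : 0 < y := by linarith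
  have h := convex_pair Real.convexOn_log_Gamma ha hax hxb hsum
  simp only [Function.comp] at h
  have hGx := Real.Gamma_pos_of_pos hx
  have hGy := Real.Gamma_pos_of_pos hy
  have hGa := Real.Gamma_pos_of_pos ha
  have hGb := Real.Gamma_pos_of_pos hb
  rw [← Real.log_mul hGx.ne' hGy.ne', ← Real.log_mul hGa.ne' hGb.ne'] at h
  exact (Real.log_le_log_iff (mul_pos hGx hGy) (mul_pos hGa hGb)).mp h

theorem central_coeff_two_sided_bound (α : ℝ) (hα1 : 1 < α) (hα2 : α < 2) :
    2 ^ (1 + α) / ((1 + α) * π) ≤ Real.Gamma (α + 1) / (Real.Gamma (α / 2 + 1)) ^ 2 ∧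
    Real.Gamma (α + 1) / (Real.Gamma (α / 2 + 1)) ^ 2 ≤ 2 ^ (1 + α) / π := by
  have hsπ : (0:ℝ) < √π := Real.sqrt_pos.2 Real.pi_pos
  have hππ : √π * √π = π := Real.mul_self_sqrt Real.pi_pos.le
  -- Gamma (3/2)
  have h32 : Real.Gamma (3/2 : ℝ) = √π / 2 := by
    have : (3/2 : ℝ) = 1/2 + 1 := by norm_num
    rw [this, Real.Gamma_add_one (by norm_num), Real.Gamma_one_half_eq]; ring
  -- duplication formula
  have hdup := Real.Gamma_mul_Gamma_add_half ((α + 1) / 2)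
  have e1 : (α + 1) / 2 + 1 / 2 = α / 2 + 1 := by ring
  have e2 : 2 * ((α + 1) / 2) = α + 1 := by ring
  have e3 : 1 - (α + 1) = -α := by ring
  rw [e1, e2, e3] at hdup
  set G1 := Real.Gamma ((α + 1) / 2) with hG1def
  set G2 := Real.Gamma (α / 2 + 1) with hG2def
  have hG1 : 0 < G1 := Real.Gamma_pos_of_pos (by linarith)
  have hG2 : 0 < G2 := Real.Gamma_pos_of_pos (by linarith)
  have h2pos : (0:ℝ) < (2:ℝ) ^ α := Real.rpow_pos_of_pos two_pos α
  have hinv : (2:ℝ) ^ (-α) = ((2:ℝ) ^ α)⁻¹ := Real.rpow_neg (by norm_num) α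
  have h2exp : (2:ℝ) ^ (1 + α) = 2 * (2:ℝ) ^ α := by
    rw [Real.rpow_add two_pos, Real.rpow_one]
  have hΓeq : Real.Gamma (α + 1) = G1 * G2 * (2:ℝ) ^ α / √π := by
    rw [hdup, hinv]; field_simp
  -- upper key: √π * G1 ≤ 2 * G2
  have key2 : √π * G1 ≤ 2 * G2 := by
    have h := Gamma_pair_le (a := 1) (x := (α + 1) / 2) (y := 3/2) (b := α / 2 + 1)
      one_pos (by linarith) (by linarith) (by ring)
    rw [Real.Gamma_one, h32, ← hG1def, ← hG2def, one_mul] at h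
    nlinarith
  -- lower key: 2 * G2 ≤ (1 + α) * √π * G1
  have key : 2 * G2 ≤ (1 + α) * √π * G1 := by
    have h := Gamma_pair_le (a := 3/2) (x := α / 2 + 1) (y := 2) (b := (α + 3) / 2)
      (by norm_num) (by linarith) (by linarith) (by ring)
    have e4 : ((α + 3) / 2 : ℝ) = (α + 1) / 2 + 1 := by ring
    have h5 : Real.Gamma ((α + 1) / 2 + 1) = (α + 1) / 2 * G1 :=
      Real.Gamma_add_one (by positivity)
    rw [Real.Gamma_two, h32, e4, h5, mul_one, ← hG2def] at h
    nlinarith [mul_pos hsπ hG1]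
  constructor
  · rw [div_le_div_iff₀ (by positivity) (by positivity), h2exp]
    have e : Real.Gamma (α + 1) * ((1 + α) * π) = ((2:ℝ) ^ α * G2) * ((1 + α) * √π * G1) := by
      rw [hΓeq]; field_simp
      linear_combination (-1 : ℝ) * hππ
    calc 2 * (2:ℝ) ^ α * G2 ^ 2 = ((2:ℝ) ^ α * G2) * (2 * G2) := by ring
      _ ≤ ((2:ℝ) ^ α * G2) * ((1 + α) * √π * G1) :=
          mul_le_mul_of_nonneg_left key (by positivity)
      _ = Real.Gamma (α + 1) * ((1 + α) * π) := e.symm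
  · rw [div_le_div_iff₀ (by positivity) Real.pi_pos, h2exp]
    have e : Real.Gamma (α + 1) * π = ((2:ℝ) ^ α * G2) * (√π * G1) := by
      rw [hΓeq]; field_simp
      linear_combination (-1 : ℝ) * hππ
    calc Real.Gamma (α + 1) * π = ((2:ℝ) ^ α * G2) * (√π * G1) := e
      _ ≤ ((2:ℝ) ^ α * G2) * (2 * G2) :=
          mul_le_mul_of_nonneg_left key2 (by positivity)
      _ = 2 * (2:ℝ) ^ α * G2 ^ 2 := by ring
end

section
/- For every real α with 1 < α < 2 and every integer k ≥ 1, the fractional centred difference coefficient admits the representation g_k^{(α)} = −(sin(πα/2)/π) · Γ(α+1) · Γ(k − α/2) / Γ(α/2 + k + 1). -/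
open Real

theorem fracCoeff_sin_Gamma_repr (α : ℝ) (hα1 : 1 < α) (hα2 : α < 2)
    (k : ℤ) (hk : 1 ≤ k) :
    fracCoeff α k =
      -(Real.sin (π * α / 2) / π) * Real.Gamma (α + 1) *
        Real.Gamma ((k : ℝ) - α / 2) / Real.Gamma (α / 2 + (k : ℝ) + 1) := by
  have hπ : (0:ℝ) < π := Real.pi_pos
  have hk' : (1:ℝ) ≤ (k:ℝ) := by exact_mod_cast hk
  have hrefl := Real.Gamma_mul_Gamma_one_sub ((k:ℝ) - α / 2)
  have hsin : Real.sin (π * ((k:ℝ) - α / 2)) = -((-1:ℝ) ^ k * Real.sin (π * α / 2)) := by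
    have h1 : π * ((k:ℝ) - α / 2) = (k:ℤ) * π - π * α / 2 := by ring
    rw [h1, Real.sin_int_mul_pi_sub]
  have hsinpos : 0 < Real.sin (π * α / 2) := by
    apply Real.sin_pos_of_pos_of_lt_pi
    · positivity
    · nlinarith
  have h1s : 1 - ((k:ℝ) - α / 2) = α / 2 - (k:ℝ) + 1 := by ring
  rw [h1s, hsin] at hrefl
  have hkα : (0:ℝ) < (k:ℝ) - α / 2 := by nlinarith
  have hΓkpos : 0 < Real.Gamma ((k:ℝ) - α / 2) := Real.Gamma_pos_of_pos hkα
  have hCpos : 0 < Real.Gamma (α / 2 + (k:ℝ) + 1) := Real.Gamma_pos_of_pos (by nlinarith)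
  have hne : (-((-1:ℝ) ^ k * Real.sin (π * α / 2))) ≠ 0 := by
    simp only [ne_eq, neg_eq_zero, mul_eq_zero, not_or]
    exact ⟨zpow_ne_zero k (by norm_num), ne_of_gt hsinpos⟩
  have hrefl2 : Real.Gamma ((k:ℝ) - α / 2) * Real.Gamma (α / 2 - (k:ℝ) + 1) *
      ((-1:ℝ) ^ k * Real.sin (π * α / 2)) = -π := by
    rw [hrefl]; field_simp
  have hBne : Real.Gamma (α / 2 - (k:ℝ) + 1) ≠ 0 := by
    intro h
    rw [h, mul_zero, zero_mul] at hrefl2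
    exact hπ.ne' (by linarith)
  have hpow : ((-1:ℝ) ^ k) * ((-1:ℝ) ^ k) = 1 := by
    rw [← zpow_add₀ (by norm_num : (-1:ℝ) ≠ 0), ← two_mul, zpow_mul]
    norm_num
  have hrefl3 : Real.Gamma ((k:ℝ) - α / 2) * Real.Gamma (α / 2 - (k:ℝ) + 1) *
      ((-1:ℝ) ^ k * Real.sin (π * α / 2)) / π = -1 := by
    rw [div_eq_iff hπ.ne']; linarith [hrefl2]
  rw [fracCoeff, div_eq_div_iff (mul_ne_zero hBne hCpos.ne') hCpos.ne']
  linear_combination ((-1:ℝ) ^ k * Real.Gamma (α + 1) * Real.Gamma (α / 2 + (k:ℝ) + 1)) * hrefl3 -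
    (Real.Gamma (α + 1) * Real.Gamma ((k:ℝ) - α / 2) * Real.Gamma (α / 2 - (k:ℝ) + 1) *
      Real.Gamma (α / 2 + (k:ℝ) + 1) * Real.sin (π * α / 2) / π) * hpow
end

section
/- As α → 2 from below, the fractional centred difference coefficients converge to the coefficients of the classical second-order centred difference: lim_{α→2⁻} g_0^{(α)} = 2, lim_{α→2⁻} g_k^{(α)} = −1 for |k| = 1, and lim_{α→2⁻} g_k^{(α)} = 0 for every integer k with |k| ≥ 2. -/
open Real

lemma continuous_invGamma : Continuous fun x : ℝ => (Real.Gamma x)⁻¹ := by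
  have h : (fun x : ℝ => (Real.Gamma x)⁻¹) = fun x : ℝ => ((Complex.Gamma (x : ℂ))⁻¹).re := by
    funext x
    rw [Complex.Gamma_ofReal, ← Complex.ofReal_inv, Complex.ofReal_re]
  rw [h]
  exact Complex.continuous_re.comp
    (Complex.differentiable_one_div_Gamma.continuous.comp Complex.continuous_ofReal)

lemma fracCoeff_continuousAt (k : ℤ) : ContinuousAt (fun α : ℝ => fracCoeff α k) 2 := by
  have h3 : ∀ m : ℕ, ((2:ℝ) + 1) ≠ -m := by
    intro m h
    have := Nat.cast_nonneg (α := ℝ) m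
    norm_num at h
    linarith
  have hadd : ContinuousAt (fun α : ℝ => α + 1) 2 := by fun_prop
  have h1 : ContinuousAt (fun α : ℝ => Real.Gamma (α + 1)) 2 :=
    ContinuousAt.comp (g := Real.Gamma) (f := fun α : ℝ => α + 1)
      (Real.differentiableAt_Gamma h3).continuousAt hadd
  have g1 : Continuous fun α : ℝ => (Real.Gamma (α / 2 - (k : ℝ) + 1))⁻¹ :=
    continuous_invGamma.comp (by fun_prop)
  have g2 : Continuous fun α : ℝ => (Real.Gamma (α / 2 + (k : ℝ) + 1))⁻¹ :=
    continuous_invGamma.comp (by fun_prop)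
  have : (fun α : ℝ => fracCoeff α k) = fun α : ℝ =>
      ((-1 : ℝ) ^ k * Real.Gamma (α + 1)) *
      ((Real.Gamma (α / 2 - (k : ℝ) + 1))⁻¹ * (Real.Gamma (α / 2 + (k : ℝ) + 1))⁻¹) := by
    funext α
    rw [fracCoeff, div_eq_mul_inv, mul_inv]
  rw [this]
  exact (continuousAt_const.mul h1).mul (g1.continuousAt.mul g2.continuousAt)

lemma fracCoeff_tendsto (k : ℤ) :
    Filter.Tendsto (fun α : ℝ => fracCoeff α k) (nhdsWithin 2 (Set.Iio 2))
      (nhds (fracCoeff 2 k)) :=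
  (fracCoeff_continuousAt k).tendsto.mono_left nhdsWithin_le_nhds

lemma Gamma_two' : Real.Gamma 2 = 1 := by
  rw [show (2:ℝ) = 1 + 1 by norm_num, Real.Gamma_add_one one_ne_zero, Real.Gamma_one]
  norm_num

lemma Gamma_three : Real.Gamma 3 = 2 := by
  have := Real.Gamma_nat_eq_factorial 2
  norm_num at this
  convert this using 2
  norm_num

theorem fracCoeff_tendsto_classical (k : ℤ) :
    (k = 0 →
      Filter.Tendsto (fun α : ℝ => fracCoeff α k) (nhdsWithin 2 (Set.Iio 2)) (nhds 2)) ∧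
    (|k| = 1 →
      Filter.Tendsto (fun α : ℝ => fracCoeff α k) (nhdsWithin 2 (Set.Iio 2)) (nhds (-1))) ∧
    (2 ≤ |k| →
      Filter.Tendsto (fun α : ℝ => fracCoeff α k) (nhdsWithin 2 (Set.Iio 2)) (nhds 0)) := by
  refine ⟨?_, ?_, ?_⟩
  · rintro rfl
    have h := fracCoeff_tendsto 0
    have : fracCoeff 2 0 = 2 := by
      rw [fracCoeff]
      push_cast
      rw [show (2:ℝ)/2 - 0 + 1 = 2 by norm_num, show (2:ℝ)/2 + 0 + 1 = 2 by norm_num,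
        show (2:ℝ)+1 = 3 by norm_num, Gamma_two', Gamma_three]
      norm_num
    rwa [this] at h
  · intro hk
    rcases abs_eq (by norm_num : (0:ℤ) ≤ 1) |>.mp hk with rfl | rfl
    · have h := fracCoeff_tendsto 1
      have : fracCoeff 2 1 = -1 := by
        rw [fracCoeff]
        push_cast
        rw [show (2:ℝ)/2 - 1 + 1 = 1 by norm_num, show (2:ℝ)/2 + 1 + 1 = 3 by norm_num,
          show (2:ℝ)+1 = 3 by norm_num, Real.Gamma_one, Gamma_three]
        norm_num
      rwa [this] at h
    · have h := fracCoeff_tendsto (-1)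
      have : fracCoeff 2 (-1) = -1 := by
        rw [fracCoeff]
        push_cast
        rw [show (2:ℝ)/2 - (-1) + 1 = 3 by norm_num, show (2:ℝ)/2 + (-1) + 1 = 1 by norm_num,
          show (2:ℝ)+1 = 3 by norm_num, Real.Gamma_one, Gamma_three]
        norm_num
      rwa [this] at h
  · intro hk
    have h := fracCoeff_tendsto k
    have : fracCoeff 2 k = 0 := by
      rw [fracCoeff]
      rcases le_or_gt 2 k with hk2 | hk2
      · have : Real.Gamma (2 / 2 - (k : ℝ) + 1) = 0 := by
          have h0 := Real.Gamma_neg_nat_eq_zero (k - 2).toNat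
          have h1 : ((k - 2).toNat : ℤ) = k - 2 := Int.toNat_of_nonneg (by omega)
          have he : (((k - 2).toNat : ℕ) : ℝ) = (k : ℝ) - 2 := by
            calc (((k - 2).toNat : ℕ) : ℝ) = (((k - 2).toNat : ℤ) : ℝ) := by push_cast; ring
            _ = ((k - 2 : ℤ) : ℝ) := by rw [h1]
            _ = (k : ℝ) - 2 := by push_cast; ring
          rw [show (2:ℝ) / 2 - (k : ℝ) + 1 = -(((k - 2).toNat : ℕ) : ℝ) by rw [he]; ring]
          exact h0
        rw [this, zero_mul, div_zero]
      · have hk2' : k ≤ -2 := by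
          rcases abs_cases k with ⟨h1, _⟩ | ⟨h1, _⟩ <;> omega
        have : Real.Gamma (2 / 2 + (k : ℝ) + 1) = 0 := by
          have h0 := Real.Gamma_neg_nat_eq_zero (-k - 2).toNat
          have h1 : ((-k - 2).toNat : ℤ) = -k - 2 := Int.toNat_of_nonneg (by omega)
          have he : (((-k - 2).toNat : ℕ) : ℝ) = -(k : ℝ) - 2 := by
            calc (((-k - 2).toNat : ℕ) : ℝ) = (((-k - 2).toNat : ℤ) : ℝ) := by push_cast; ring
            _ = ((-k - 2 : ℤ) : ℝ) := by rw [h1]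
            _ = -(k : ℝ) - 2 := by push_cast; ring
          rw [show (2:ℝ) / 2 + (k : ℝ) + 1 = -(((-k - 2).toNat : ℕ) : ℝ) by rw [he]; ring]
          exact h0
        rw [this, mul_zero, div_zero]
    rwa [this] at h
end
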